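/- arXiv:0812.4562 — 5 statements merged into one kernel-verified Lean document; each statement's English description precedes it below -/
import Mathlib

section
/- Let Γ be a (d−1)-dimensional shellable simplicial complex with h-vector (h_0, h_1, …, h_d), and let L = (τ_1, …, τ_r) be a shelling of Γ. Then for each i with 0 ≤ i ≤ d, h_i equals the number of facets τ_j such that |T_L(τ_j)| = i. -/
open Finset

/-- An (abstract) simplicial complex: a family of finite subsets closed under taking subsets. -/
def IsComplex {V : Type*} (K : Set (Finset V)) : Prop :=
  ∀ s ∈ K, ∀ t, t ⊆ s → t ∈ K

/-- Number of faces of cardinality `i` (that is, `f_{i-1}`). -/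
noncomputable def faceCount {V : Type*} (K : Set (Finset V)) (i : ℕ) : ℕ :=
  {s | s ∈ K ∧ s.card = i}.ncard

/-- `h` is the h-vector of the `(d-1)`-dimensional complex `K`:
`Σ_{i=0}^d h_i x^i = Σ_{i=0}^d f_{i-1} x^i (1-x)^{d-i}`. -/
def IsHVector {V : Type*} (K : Set (Finset V)) (d : ℕ) (h : ℕ → ℤ) : Prop :=
  ∑ i ∈ Finset.range (d + 1), Polynomial.C (h i) * Polynomial.X ^ i =
    ∑ i ∈ Finset.range (d + 1),
      Polynomial.C ((faceCount K i : ℤ)) * Polynomial.X ^ i * (1 - Polynomial.X) ^ (d - i)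

/-- `K` is pure of dimension `d - 1`: nonempty in top dimension, and every face is
contained in a face of cardinality `d`. -/
def IsPureDim {V : Type*} (K : Set (Finset V)) (d : ℕ) : Prop :=
  (∃ s ∈ K, s.card = d) ∧ ∀ s ∈ K, ∃ t ∈ K, s ⊆ t ∧ t.card = d

/-- The facets listed before `τ` in the ordering `L`. -/
def prevFacets {V : Type*} [DecidableEq V] (L : List (Finset V)) (τ : Finset V) :
    List (Finset V) :=
  L.takeWhile (fun τ' => τ' != τ)

/-- `γ` lies in `∪_{j<i} τ̄_j`, the union of the closures of the facets listed before `τ`. -/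
def coveredBefore {V : Type*} [DecidableEq V] (L : List (Finset V)) (τ γ : Finset V) : Prop :=
  ∃ τ' ∈ prevFacets L τ, γ ⊆ τ'

/-- `T_L(τ)`: the set of facets of `τ̄ ∩ (∪_{j<i} τ̄_j)`. -/
def TL {V : Type*} [DecidableEq V] (L : List (Finset V)) (τ : Finset V) : Set (Finset V) :=
  {γ | γ ⊆ τ ∧ coveredBefore L τ γ ∧
    ∀ γ', γ ⊆ γ' → γ' ⊆ τ → coveredBefore L τ γ' → γ' = γ}

/-- `L` is a shelling of the pure `(d-1)`-dimensional complex `K`: it lists the facets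
(faces of cardinality `d`) without repetition, every face of `K` lies under some facet,
and for every non-initial facet `τ` the complex `τ̄ ∩ (∪_{j<i} τ̄_j)` is pure of
dimension `d - 2`. -/
def IsShelling {V : Type*} [DecidableEq V] (K : Set (Finset V)) (d : ℕ)
    (L : List (Finset V)) : Prop :=
  L.Nodup ∧
  (∀ τ, τ ∈ L ↔ τ ∈ K ∧ τ.card = d) ∧
  (∀ s ∈ K, ∃ t ∈ L, s ⊆ t) ∧
  (∀ τ ∈ L, prevFacets L τ ≠ [] →
    IsPureDim {γ | γ ⊆ τ ∧ coveredBefore L τ γ} (d - 1))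

/-- Monomials in `k` variables `x_0 < x_1 < … < x_{k-1}`, recorded by exponent vectors. -/
abbrev Mono (k : ℕ) := Fin k → ℕ

/-- Total degree of a monomial. -/
def mDeg {k : ℕ} (μ : Mono k) : ℕ := ∑ i, μ i

/-- Divisibility of monomials. -/
def mDvd {k : ℕ} (ν μ : Mono k) : Prop := ∀ i, ν i ≤ μ i

/-- `S(a_1, …, a_k)`: monomials whose exponent of `x_i` is at most `a_i ∈ ℕ ∪ {∞}`. -/
def SBound {k : ℕ} (b : Fin k → ℕ∞) : Set (Mono k) :=
  {μ | ∀ i, (μ i : ℕ∞) ≤ b i}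

/-- A multicomplex in `S(b)`: a nonempty set of monomials of `S(b)` closed under divisibility. -/
def IsMulticomplex {k : ℕ} (b : Fin k → ℕ∞) (M : Set (Mono k)) : Prop :=
  M.Nonempty ∧ M ⊆ SBound b ∧ ∀ μ ∈ M, ∀ ν, mDvd ν μ → ν ∈ M

/-- `F_i(M)`: the number of monomials of `M` of total degree `i`. -/
noncomputable def FVec {k : ℕ} (M : Set (Mono k)) (i : ℕ) : ℕ :=
  {μ ∈ M | mDeg μ = i}.ncard

/-- Reverse lexicographic order (within a fixed total degree): `μ < ν` if for some `i`
the exponent of `x_i` in `μ` is smaller and the exponents agree beyond `i`. -/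
def mRlexLt {k : ℕ} (μ ν : Mono k) : Prop :=
  ∃ i, μ i < ν i ∧ ∀ j, i < j → μ j = ν j

/-- The bound vector `(∞^{n-d-m}, p_1 - 1, …, p_m - 1)` on `n - d` variables. -/
def lamBounds (n d m : ℕ) (p : Fin m → ℕ) : Fin (n - d) → ℕ∞ :=
  fun j =>
    if (j : ℕ) < n - d - m then ⊤
    else if h2 : (j : ℕ) - (n - d - m) < m then (((p ⟨(j : ℕ) - (n - d - m), h2⟩ - 1 : ℕ)) : ℕ∞)
    else 0

/-- The vertex set of `Λ(l; p_1, …, p_m)`: a set `V'` of size `l` together with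
disjoint sets `P_i` of sizes `p_i`. -/
abbrev LamVert (l : ℕ) {m : ℕ} (p : Fin m → ℕ) := Fin l ⊕ Σ i : Fin m, Fin (p i)

/-- The vertex block `P_i`. -/
def Pblock (l : ℕ) {m : ℕ} (p : Fin m → ℕ) (i : Fin m) : Finset (LamVert l p) :=
  Finset.univ.image (fun j : Fin (p i) => (Sum.inr ⟨i, j⟩ : LamVert l p))

/-- The faces of `Λ(l; p_1, …, p_m)`: subsets of the vertex set containing no `P_i` entirely. -/
def LambdaFaces (l : ℕ) {m : ℕ} (p : Fin m → ℕ) : Set (Finset (LamVert l p)) :=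
  {F | ∀ i : Fin m, ¬ Pblock l p i ⊆ F}

/-- `full(τ) = {i : |P_i ∩ τ| = |P_i| - 1}`. -/
def fullSet {l m : ℕ} {p : Fin m → ℕ} (τ : Finset (LamVert l p)) : Finset (Fin m) :=
  Finset.univ.filter (fun i => (Pblock l p i ∩ τ).card = p i - 1)

/-- The elements of `P_i` missing from `τ`; a singleton `{miss(τ, i)}` when `i ∈ full(τ)`. -/
def missSet {l m : ℕ} {p : Fin m → ℕ} (τ : Finset (LamVert l p)) (i : Fin m) :
    Finset (LamVert l p) :=
  Pblock l p i \ τ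

/-- Candidates for `s_O(τ)`: vertices not in `τ` and different from each `miss(τ, i)`,
`i ∈ full(τ)`. -/
def sCand {l m : ℕ} {p : Fin m → ℕ} (τ : Finset (LamVert l p)) : Finset (LamVert l p) :=
  Finset.univ.filter (fun v => v ∉ τ ∧ ∀ i ∈ fullSet τ, v ∉ missSet τ i)

/-- The position (with respect to the ordering `e`) of `s_O(τ)`, or `∞` if it does not exist. -/
noncomputable def sPos {l m n : ℕ} {p : Fin m → ℕ} (e : LamVert l p ≃ Fin n)
    (τ : Finset (LamVert l p)) : WithTop (Fin n) :=
  ((sCand τ).image e).min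

/-- `τ_{> s_O(τ)}`. -/
noncomputable def tauAbove {l m n : ℕ} {p : Fin m → ℕ} (e : LamVert l p ≃ Fin n)
    (τ : Finset (LamVert l p)) : Finset (LamVert l p) :=
  τ.filter (fun y => sPos e τ < ((e y : Fin n) : WithTop (Fin n)))

/-- `U_O(τ) = { y ∈ P_i : y > miss(τ, i) for some i ∈ full(τ) }`. -/
def USet {l m n : ℕ} {p : Fin m → ℕ} (e : LamVert l p ≃ Fin n)
    (τ : Finset (LamVert l p)) : Finset (LamVert l p) :=
  Finset.univ.filter
    (fun y => ∃ i ∈ fullSet τ, y ∈ Pblock l p i ∧ ∃ w ∈ missSet τ i, e w < e y)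

/-- `R_O(τ) = τ_{> s_O(τ)} ∪ U_O(τ)`. -/
noncomputable def RSet {l m n : ℕ} {p : Fin m → ℕ} (e : LamVert l p ≃ Fin n)
    (τ : Finset (LamVert l p)) : Finset (LamVert l p) :=
  tauAbove e τ ∪ USet e τ

/-- Reverse lexicographic comparison of two finite vertex sets with respect to the
ordering `e`: `τ < τ'` if the largest vertex in which they differ belongs to `τ'`. -/
def rlexLt {l m n : ℕ} {p : Fin m → ℕ} (e : LamVert l p ≃ Fin n)
    (τ τ' : Finset (LamVert l p)) : Prop :=
  ∃ v, v ∈ τ' ∧ v ∉ τ ∧ ∀ w, e v < e w → (w ∈ τ ↔ w ∈ τ')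

/-- The `d`-skeleton of `Λ`: faces of cardinality at most `d`. -/
def skel (l : ℕ) {m : ℕ} (p : Fin m → ℕ) (d : ℕ) : Set (Finset (LamVert l p)) :=
  {F | F ∈ LambdaFaces l p ∧ F.card ≤ d}

/-- The facets of the `d`-skeleton of `Λ`: faces of cardinality exactly `d`. -/
def skelFacets (l : ℕ) {m : ℕ} (p : Fin m → ℕ) (d : ℕ) : Set (Finset (LamVert l p)) :=
  {F | F ∈ LambdaFaces l p ∧ F.card = d}

/-- `S^d`: the monomials of `S(b)` of total degree at most `d`. -/
def SBoundDeg {k : ℕ} (b : Fin k → ℕ∞) (d : ℕ) : Set (Mono k) :=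
  {μ | μ ∈ SBound b ∧ mDeg μ ≤ d}

attribute [local instance 10] Classical.propDecidable

section Aux
variable {V : Type*} [DecidableEq V]

lemma mem_of_mem_prevFacets {L : List (Finset V)} {τ τ' : Finset V}
    (h : τ' ∈ prevFacets L τ) : τ' ∈ L :=
  (List.takeWhile_prefix _).subset h

lemma ne_of_mem_prevFacets {L : List (Finset V)} {τ τ' : Finset V}
    (h : τ' ∈ prevFacets L τ) : τ' ≠ τ := by
  simpa using List.mem_takeWhile_imp h

lemma coveredBefore_mono {L : List (Finset V)} {τ γ γ' : Finset V}
    (h : coveredBefore L τ γ') (hsub : γ ⊆ γ') : coveredBefore L τ γ :=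
  let ⟨t, ht, h2⟩ := h; ⟨t, ht, hsub.trans h2⟩

lemma prevFacets_trichotomy {L : List (Finset V)} (hnd : L.Nodup) {a b : Finset V}
    (ha : a ∈ L) (hb : b ∈ L) (hne : a ≠ b) :
    a ∈ prevFacets L b ∨ b ∈ prevFacets L a := by
  induction L with
  | nil => cases ha
  | cons c L ih =>
    rcases List.mem_cons.1 ha with rfl | ha'
    · left
      simp [prevFacets, List.takeWhile_cons, hne]
    · rcases List.mem_cons.1 hb with rfl | hb'
      · right
        simp [prevFacets, List.takeWhile_cons, Ne.symm hne]
      · have hcb : c ≠ b := fun h => (List.nodup_cons.1 hnd).1 (h ▸ hb')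
        have hca : c ≠ a := fun h => (List.nodup_cons.1 hnd).1 (h ▸ ha')
        rcases ih (List.nodup_cons.1 hnd).2 ha' hb' with h | h
        · left; simp only [prevFacets, List.takeWhile_cons, bne_iff_ne, ne_eq, hcb,
            not_false_eq_true, if_pos, List.mem_cons]
          right; exact h
        · right; simp only [prevFacets, List.takeWhile_cons, bne_iff_ne, ne_eq, hca,
            not_false_eq_true, if_pos, List.mem_cons]
          right; exact h

lemma exists_earliest {L : List (Finset V)} {γ : Finset V}
    (h : ∃ t ∈ L, γ ⊆ t) : ∃ τ ∈ L, γ ⊆ τ ∧ ¬ coveredBefore L τ γ := by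
  induction L with
  | nil => simp at h
  | cons c L ih =>
    by_cases hc : γ ⊆ c
    · refine ⟨c, List.mem_cons_self, hc, ?_⟩
      rintro ⟨t, ht, -⟩
      simp [prevFacets, List.takeWhile_cons] at ht
    · obtain ⟨t, ht, hsub⟩ := h
      have ht' : t ∈ L := by
        rcases List.mem_cons.1 ht with rfl | h'
        · exact absurd hsub hc
        · exact h'
      obtain ⟨τ, hτ, hγτ, hnc⟩ := ih ⟨t, ht', hsub⟩
      refine ⟨τ, List.mem_cons_of_mem _ hτ, hγτ, ?_⟩
      have hcτ : c ≠ τ := by rintro rfl; exact hc hγτ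
      rintro ⟨t', ht', hsub'⟩
      have hpf : prevFacets (c :: L) τ = c :: prevFacets L τ := by
        simp [prevFacets, List.takeWhile_cons, hcτ]
      rw [hpf] at ht'
      rcases List.mem_cons.1 ht' with rfl | h'
      · exact hc hsub'
      · exact hnc ⟨t', h', hsub'⟩

/-- The restriction face of a facet `τ`. -/
noncomputable def Rres (L : List (Finset V)) (τ : Finset V) : Finset V :=
  τ.filter (fun v => coveredBefore L τ (τ.erase v))

lemma Rres_subset (L : List (Finset V)) (τ : Finset V) : Rres L τ ⊆ τ :=
  Finset.filter_subset _ _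

lemma coveredBefore_iff {K : Set (Finset V)} {d : ℕ} {L : List (Finset V)}
    (hL : IsShelling K d L) {τ γ : Finset V} (hτ : τ ∈ L) (hγ : γ ⊆ τ) :
    coveredBefore L τ γ ↔ ∃ v ∈ Rres L τ, v ∉ γ := by
  obtain ⟨hnd, hmem, hcov, hpure⟩ := hL
  constructor
  · intro hcb
    obtain ⟨τ', hτ'p, hsub⟩ := hcb
    have hτ'L := mem_of_mem_prevFacets hτ'p
    have hτd : τ.card = d := ((hmem τ).1 hτ).2
    have hτ'd : τ'.card = d := ((hmem τ').1 hτ'L).2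
    have hne : τ' ≠ τ := ne_of_mem_prevFacets hτ'p
    have hprev : prevFacets L τ ≠ [] := by
      intro h; rw [h] at hτ'p; cases hτ'p
    obtain ⟨-, hpure2⟩ := hpure τ hτ hprev
    obtain ⟨t, ht, hγt, htcard⟩ := hpure2 γ ⟨hγ, τ', hτ'p, hsub⟩
    obtain ⟨htτ, htcb⟩ := ht
    have hd : 1 ≤ d := by
      by_contra hcon
      have hd0 : d = 0 := by omega
      apply hne
      have h1 : τ' = ∅ := Finset.card_eq_zero.1 (by omega)
      have h2 : τ = ∅ := Finset.card_eq_zero.1 (by omega)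
      rw [h1, h2]
    have htlt : t.card < τ.card := by omega
    obtain ⟨v, hvτ, hvt⟩ : ∃ v ∈ τ, v ∉ t := by
      by_contra hcon
      push_neg at hcon
      exact absurd (Finset.card_le_card hcon) (by omega)
    have hte : t = τ.erase v := by
      apply Finset.eq_of_subset_of_card_le (Finset.subset_erase.2 ⟨htτ, hvt⟩)
      rw [Finset.card_erase_of_mem hvτ]
      omega
    refine ⟨v, Finset.mem_filter.2 ⟨hvτ, hte ▸ htcb⟩, fun hvγ => hvt (hγt hvγ)⟩
  · rintro ⟨v, hv, hvγ⟩
    exact coveredBefore_mono (Finset.mem_filter.1 hv).2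
      (Finset.subset_erase.2 ⟨hγ, hvγ⟩)

lemma not_coveredBefore_iff {K : Set (Finset V)} {d : ℕ} {L : List (Finset V)}
    (hL : IsShelling K d L) {τ γ : Finset V} (hτ : τ ∈ L) (hγ : γ ⊆ τ) :
    ¬ coveredBefore L τ γ ↔ Rres L τ ⊆ γ := by
  rw [coveredBefore_iff hL hτ hγ]
  push_neg
  exact Iff.rfl

lemma TL_eq {K : Set (Finset V)} {d : ℕ} {L : List (Finset V)}
    (hL : IsShelling K d L) {τ : Finset V} (hτ : τ ∈ L) :
    TL L τ = ↑((Rres L τ).image (fun v => τ.erase v)) := by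
  ext γ
  simp only [TL, Set.mem_setOf_eq, Finset.coe_image, Set.mem_image, Finset.mem_coe]
  constructor
  · rintro ⟨hγτ, hcb, hmax⟩
    rw [coveredBefore_iff hL hτ hγτ] at hcb
    obtain ⟨v, hv, hvγ⟩ := hcb
    have herase_cb : coveredBefore L τ (τ.erase v) := (Finset.mem_filter.1 hv).2
    have hsub : γ ⊆ τ.erase v := Finset.subset_erase.2 ⟨hγτ, hvγ⟩
    exact ⟨v, hv, hmax (τ.erase v) hsub (Finset.erase_subset _ _) herase_cb⟩
  · rintro ⟨v, hv, rfl⟩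
    have hvτ : v ∈ τ := Finset.mem_of_mem_filter _ hv
    refine ⟨Finset.erase_subset _ _, (Finset.mem_filter.1 hv).2, ?_⟩
    intro γ' h1 h2 h3
    rw [coveredBefore_iff hL hτ h2] at h3
    obtain ⟨w, hw, hwγ'⟩ := h3
    have hwv : w = v := by
      by_contra hne
      exact hwγ' (h1 (Finset.mem_erase.2 ⟨hne, Rres_subset L τ hw⟩))
    exact Finset.Subset.antisymm (Finset.subset_erase.2 ⟨h2, hwv ▸ hwγ'⟩) h1

lemma TL_ncard {K : Set (Finset V)} {d : ℕ} {L : List (Finset V)}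
    (hL : IsShelling K d L) {τ : Finset V} (hτ : τ ∈ L) :
    (TL L τ).ncard = (Rres L τ).card := by
  rw [TL_eq hL hτ, Set.ncard_coe_finset, Finset.card_image_of_injOn]
  intro a ha b hb hab
  exact (Finset.erase_inj τ (Rres_subset L τ ha)).1 hab

end Aux

section Aux2
variable {V : Type*} [DecidableEq V]

/-- The interval `[Rres L τ, τ]`. -/
noncomputable def interval (L : List (Finset V)) (τ : Finset V) : Finset (Finset V) :=
  τ.powerset.filter (fun γ => Rres L τ ⊆ γ)

lemma mem_interval {L : List (Finset V)} {τ γ : Finset V} :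
    γ ∈ interval L τ ↔ Rres L τ ⊆ γ ∧ γ ⊆ τ := by
  simp [interval, and_comm]

lemma K_eq_biUnion {K : Set (Finset V)} {d : ℕ} {L : List (Finset V)}
    (hK : IsComplex K) (hL : IsShelling K d L) :
    K = ↑(L.toFinset.biUnion (fun τ => interval L τ)) := by
  ext γ
  simp only [Finset.mem_coe, Finset.mem_biUnion, List.mem_toFinset]
  constructor
  · intro hγ
    obtain ⟨τ, hτ, hsub, hnc⟩ := exists_earliest (hL.2.2.1 γ hγ)
    exact ⟨τ, hτ, mem_interval.2 ⟨(not_coveredBefore_iff hL hτ hsub).1 hnc, hsub⟩⟩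
  · rintro ⟨τ, hτ, hγ⟩
    exact hK τ ((hL.2.1 τ).1 hτ).1 γ (mem_interval.1 hγ).2

lemma interval_aux {K : Set (Finset V)} {d : ℕ} {L : List (Finset V)}
    (hL : IsShelling K d L) {a b γ : Finset V}
    (hab : a ∈ prevFacets L b) (hb : b ∈ L)
    (hγa : γ ∈ interval L a) (hγb : γ ∈ interval L b) : False := by
  have h1 := (mem_interval.1 hγa).2
  have h2 := mem_interval.1 hγb
  exact (not_coveredBefore_iff hL hb h2.2).2 h2.1 ⟨a, hab, h1⟩

lemma interval_disjoint {K : Set (Finset V)} {d : ℕ} {L : List (Finset V)}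
    (hL : IsShelling K d L) :
    (↑L.toFinset : Set (Finset V)).PairwiseDisjoint (fun τ => interval L τ) := by
  intro a ha b hb hne
  simp only [Finset.mem_coe, List.mem_toFinset] at ha hb
  simp only [Function.onFun]
  rw [Finset.disjoint_left]
  intro γ hγa hγb
  rcases prevFacets_trichotomy hL.1 ha hb hne with h | h
  · exact interval_aux hL h hb hγa hγb
  · exact interval_aux hL h ha hγb hγa

open Polynomial in
lemma interval_sum {K : Set (Finset V)} {d : ℕ} {L : List (Finset V)}
    (hL : IsShelling K d L) {τ : Finset V} (hτ : τ ∈ L) :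
    ∑ γ ∈ interval L τ, (X : ℤ[X]) ^ γ.card * (1 - X) ^ (d - γ.card)
      = (X : ℤ[X]) ^ (Rres L τ).card := by
  have hτd : τ.card = d := ((hL.2.1 τ).1 hτ).2
  set R := Rres L τ with hRdef
  have hRτ : R ⊆ τ := Rres_subset L τ
  have hRd : R.card ≤ d := hτd ▸ Finset.card_le_card hRτ
  have hcard : (τ \ R).card = d - R.card := by
    rw [Finset.card_sdiff_of_subset hRτ, hτd]
  have key : ∑ t ∈ (τ \ R).powerset,
      (X : ℤ[X]) ^ t.card * (1 - X) ^ ((τ \ R).card - t.card) = 1 := by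
    have h0 := Finset.prod_add (fun _ : V => (X : ℤ[X])) (fun _ => 1 - X) (τ \ R)
    simp only [Finset.prod_const] at h0
    have h1 : (X + (1 - X) : ℤ[X]) = 1 := by ring
    rw [h1, one_pow] at h0
    have h2 : ∑ t ∈ (τ \ R).powerset, (X : ℤ[X]) ^ t.card * (1 - X) ^ ((τ \ R).card - t.card)
        = ∑ t ∈ (τ \ R).powerset, (X : ℤ[X]) ^ t.card * (1 - X) ^ ((τ \ R) \ t).card :=
      Finset.sum_congr rfl fun t ht => by
        rw [Finset.card_sdiff_of_subset (Finset.mem_powerset.1 ht)]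
    rw [h2, ← h0]
  calc ∑ γ ∈ interval L τ, (X : ℤ[X]) ^ γ.card * (1 - X) ^ (d - γ.card)
      = ∑ t ∈ (τ \ R).powerset,
          (X : ℤ[X]) ^ R.card * ((X : ℤ[X]) ^ t.card * (1 - X) ^ ((τ \ R).card - t.card)) := ?_
    _ = (X : ℤ[X]) ^ R.card := by rw [← Finset.mul_sum, key, mul_one]
  apply Finset.sum_nbij' (fun γ => γ \ R) (fun t => R ∪ t)
  · intro γ hγ
    obtain ⟨h1, h2⟩ := mem_interval.1 hγ
    exact Finset.mem_powerset.2 (Finset.sdiff_subset_sdiff h2 (le_refl _))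
  · intro t ht
    have h1 : t ⊆ τ \ R := Finset.mem_powerset.1 ht
    exact mem_interval.2 ⟨Finset.subset_union_left,
      Finset.union_subset hRτ (h1.trans Finset.sdiff_subset)⟩
  · intro γ hγ
    exact Finset.union_sdiff_of_subset (mem_interval.1 hγ).1
  · intro t ht
    have h1 : t ⊆ τ \ R := Finset.mem_powerset.1 ht
    have hdisj : Disjoint R t := Finset.disjoint_left.2
      (fun v hv ht' => (Finset.mem_sdiff.1 (h1 ht')).2 hv)
    rw [Finset.union_sdiff_cancel_left hdisj]
  · intro γ hγ
    obtain ⟨h1, h2⟩ := mem_interval.1 hγ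
    have hc1 : (γ \ R).card + R.card = γ.card := Finset.card_sdiff_add_card_eq_card h1
    have hc2 : γ.card ≤ d := hτd ▸ Finset.card_le_card h2
    have hc3 : (γ \ R).card ≤ (τ \ R).card :=
      Finset.card_le_card (Finset.sdiff_subset_sdiff h2 (le_refl _))
    have he1 : γ.card = R.card + (γ \ R).card := by omega
    have he2 : d - γ.card = (τ \ R).card - (γ \ R).card := by omega
    rw [he2, he1, pow_add, mul_assoc]
end Aux2

section Main
variable {V : Type*} [DecidableEq V]
open Polynomial

theorem hvector_eq_shelling_count' {V : Type*} [DecidableEq V] (K : Set (Finset V)) (d : ℕ)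
    (L : List (Finset V)) (h : ℕ → ℤ)
    (hK : IsComplex K) (hL : IsShelling K d L) (hh : IsHVector K d h) :
    ∀ i ≤ d, h i = ({τ | τ ∈ L ∧ (TL L τ).ncard = i}.ncard : ℤ) := by
  intro i hi
  set faces := L.toFinset.biUnion (fun τ => interval L τ) with hfaces
  have hKf : K = ↑faces := K_eq_biUnion hK hL
  have hfc : ∀ j, faceCount K j = (faces.filter (fun γ => γ.card = j)).card := by
    intro j
    rw [faceCount, hKf]
    have e : {s | s ∈ (↑faces : Set (Finset V)) ∧ s.card = j}
        = ↑(faces.filter (fun γ => γ.card = j)) := by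
      ext s
      simp [Finset.mem_filter]
    rw [e, Set.ncard_coe_finset]
  have step1 : ∑ j ∈ Finset.range (d+1),
      C ((faceCount K j : ℤ)) * X ^ j * (1 - X) ^ (d - j)
      = ∑ τ ∈ L.toFinset, (X : ℤ[X]) ^ (Rres L τ).card := by
    have hmap : ∀ γ ∈ faces, γ.card ∈ Finset.range (d+1) := by
      intro γ hγ
      obtain ⟨τ, hτ, hγτ⟩ := Finset.mem_biUnion.1 hγ
      have h1 : γ ⊆ τ := (mem_interval.1 hγτ).2
      have hd := ((hL.2.1 τ).1 (List.mem_toFinset.1 hτ)).2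
      have h2 := Finset.card_le_card h1
      simp only [Finset.mem_range]
      omega
    calc ∑ j ∈ Finset.range (d+1), C ((faceCount K j : ℤ)) * X ^ j * (1 - X) ^ (d - j)
        = ∑ j ∈ Finset.range (d+1), ∑ γ ∈ faces.filter (fun γ => γ.card = j),
            (X:ℤ[X]) ^ γ.card * (1 - X) ^ (d - γ.card) := ?_
      _ = ∑ γ ∈ faces, (X:ℤ[X]) ^ γ.card * (1 - X) ^ (d - γ.card) :=
          Finset.sum_fiberwise_of_maps_to hmap _
      _ = ∑ τ ∈ L.toFinset, ∑ γ ∈ interval L τ,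
            (X:ℤ[X]) ^ γ.card * (1 - X) ^ (d - γ.card) :=
          Finset.sum_biUnion (interval_disjoint hL)
      _ = ∑ τ ∈ L.toFinset, (X:ℤ[X]) ^ (Rres L τ).card :=
          Finset.sum_congr rfl fun τ hτ => interval_sum hL (List.mem_toFinset.1 hτ)
    apply Finset.sum_congr rfl
    intro j hj
    have e1 : ∑ γ ∈ faces.filter (fun γ => γ.card = j),
        (X:ℤ[X]) ^ γ.card * (1 - X) ^ (d - γ.card)
        = (faces.filter (fun γ => γ.card = j)).card • ((X:ℤ[X]) ^ j * (1 - X) ^ (d - j)) := by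
      rw [← Finset.sum_const]
      apply Finset.sum_congr rfl
      intro γ hγ
      rw [(Finset.mem_filter.1 hγ).2]
    rw [e1, nsmul_eq_mul, hfc j]
    simp [Polynomial.C_eq_natCast, mul_assoc]
  have step2 : ∑ τ ∈ L.toFinset, (X:ℤ[X]) ^ (Rres L τ).card
      = ∑ j ∈ Finset.range (d+1),
          C (((L.toFinset.filter (fun τ => (Rres L τ).card = j)).card : ℤ)) * X ^ j := by
    have hmap' : ∀ τ ∈ L.toFinset, (Rres L τ).card ∈ Finset.range (d+1) := by
      intro τ hτ
      have hd := ((hL.2.1 τ).1 (List.mem_toFinset.1 hτ)).2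
      have h2 := Finset.card_le_card (Rres_subset L τ)
      simp only [Finset.mem_range]
      omega
    rw [← Finset.sum_fiberwise_of_maps_to hmap'
      (fun τ => (X:ℤ[X]) ^ (Rres L τ).card)]
    apply Finset.sum_congr rfl
    intro j hj
    have e1 : ∑ τ ∈ L.toFinset.filter (fun τ => (Rres L τ).card = j),
        (X:ℤ[X]) ^ (Rres L τ).card
        = (L.toFinset.filter (fun τ => (Rres L τ).card = j)).card • ((X:ℤ[X]) ^ j) := by
      rw [← Finset.sum_const]
      apply Finset.sum_congr rfl
      intro τ hτ
      rw [(Finset.mem_filter.1 hτ).2]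
    rw [e1, nsmul_eq_mul]
    simp [Polynomial.C_eq_natCast]
  have hh' : ∑ j ∈ Finset.range (d + 1), C (h j) * X ^ j =
      ∑ j ∈ Finset.range (d + 1),
        C ((faceCount K j : ℤ)) * X ^ j * (1 - X) ^ (d - j) := hh
  rw [step1, step2] at hh'
  have hcoeff := congrArg (fun p => Polynomial.coeff p i) hh'
  simp only [Polynomial.finset_sum_coeff, Polynomial.coeff_C_mul, Polynomial.coeff_X_pow,
    mul_ite, mul_one, mul_zero, Finset.sum_ite_eq, Finset.mem_range] at hcoeff
  simp only [show i < d + 1 by omega, if_true] at hcoeff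
  have hset : {τ | τ ∈ L ∧ (TL L τ).ncard = i}
      = ↑(L.toFinset.filter (fun τ => (Rres L τ).card = i)) := by
    ext τ
    simp only [Set.mem_setOf_eq, Finset.coe_filter, List.mem_toFinset]
    constructor
    · rintro ⟨h1, h2⟩
      exact ⟨h1, by rw [← TL_ncard hL h1]; exact h2⟩
    · rintro ⟨h1, h2⟩
      exact ⟨h1, by rw [TL_ncard hL h1]; exact h2⟩
  rw [hset, Set.ncard_coe_finset]
  exact hcoeff

end Main


/-- If `L` is a shelling of the `(d-1)`-dimensional complex `Γ` with
h-vector `h`, then `h_i` is the number of facets `τ` with `|T_L(τ)| = i`. -/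
theorem hvector_eq_shelling_count {V : Type*} [DecidableEq V] (K : Set (Finset V)) (d : ℕ)
    (L : List (Finset V)) (h : ℕ → ℤ)
    (hK : IsComplex K) (hL : IsShelling K d L) (hh : IsHVector K d h) :
    ∀ i ≤ d, h i = ({τ | τ ∈ L ∧ (TL L τ).ncard = i}.ncard : ℤ) := by
  exact hvector_eq_shelling_count' K d L h hK hL hh
end

section
/- Let Γ be a (d−1)-dimensional simplicial complex with shelling L, and let K be a subset of the set of facets of Γ. Let L' = (τ'_1, τ'_2, …, τ'_{r'}) be the ordering of K inherited from L, and suppose T_{L'}(τ) = T_L(τ) for every τ ∈ K. Then Γ' = ∪_{i=1}^{r'} τ̄'_i is a shellable subcomplex of Γ (with L' a shelling of Γ'), and its h-vector (h'_0, …, h'_d) satisfies h'_i = |{ τ ∈ K : |T_L(τ)| = i }| for each i. -/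
open Finset

namespace Subshell

variable {V : Type*} [DecidableEq V]

lemma prevFacets_cons_self (a : Finset V) (l : List (Finset V)) :
    prevFacets (a :: l) a = [] := by
  simp [prevFacets]

lemma prevFacets_cons_ne {a τ : Finset V} (l : List (Finset V)) (h : a ≠ τ) :
    prevFacets (a :: l) τ = a :: prevFacets l τ := by
  simp [prevFacets, h]

lemma mem_prevFacets {L : List (Finset V)} {τ σ : Finset V} (h : σ ∈ prevFacets L τ) :
    σ ∈ L ∧ σ ≠ τ := by
  refine ⟨(List.takeWhile_sublist _).mem h, ?_⟩
  have := List.mem_takeWhile_imp h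
  simpa using this

lemma coveredBefore_mono {L : List (Finset V)} {τ γ γ' : Finset V} (hsub : γ ⊆ γ')
    (h : coveredBefore L τ γ') : coveredBefore L τ γ := by
  obtain ⟨σ, hσ, hsub'⟩ := h
  exact ⟨σ, hσ, hsub.trans hsub'⟩

lemma mem_prevFacets_or {L : List (Finset V)} (hnd : L.Nodup) {τ₁ τ₂ : Finset V}
    (h1 : τ₁ ∈ L) (h2 : τ₂ ∈ L) (hne : τ₁ ≠ τ₂) :
    τ₁ ∈ prevFacets L τ₂ ∨ τ₂ ∈ prevFacets L τ₁ := by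
  induction L with
  | nil => simp at h1
  | cons a l ih =>
    rcases List.mem_cons.mp h1 with rfl | h1'
    · left; rw [prevFacets_cons_ne l hne]; exact List.mem_cons_self
    · rcases List.mem_cons.mp h2 with rfl | h2'
      · right; rw [prevFacets_cons_ne l hne.symm]; exact List.mem_cons_self
      · have hnd' := (List.nodup_cons.mp hnd).2
        have hane1 : a ≠ τ₂ := fun h => (List.nodup_cons.mp hnd).1 (h ▸ h2')
        have hane2 : a ≠ τ₁ := fun h => (List.nodup_cons.mp hnd).1 (h ▸ h1')
        rcases ih hnd' h1' h2' with h | h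
        · left; rw [prevFacets_cons_ne l hane1]; exact List.mem_cons_of_mem _ h
        · right; rw [prevFacets_cons_ne l hane2]; exact List.mem_cons_of_mem _ h

lemma exists_first {L : List (Finset V)} {γ : Finset V} (h : ∃ τ ∈ L, γ ⊆ τ) :
    ∃ τ ∈ L, γ ⊆ τ ∧ ¬ coveredBefore L τ γ := by
  induction L with
  | nil => simp at h
  | cons a l ih =>
    by_cases hga : γ ⊆ a
    · refine ⟨a, List.mem_cons_self, hga, ?_⟩
      rintro ⟨σ, hσ, -⟩
      rw [prevFacets_cons_self] at hσ
      simp at hσ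
    · obtain ⟨τ, hτ, hγτ⟩ := h
      rcases List.mem_cons.mp hτ with rfl | hτ'
      · exact absurd hγτ hga
      obtain ⟨τ', hτ'l, hγτ', hnc⟩ := ih ⟨τ, hτ', hγτ⟩
      have hne : a ≠ τ' := by rintro rfl; exact hga hγτ'
      refine ⟨τ', List.mem_cons_of_mem _ hτ'l, hγτ', ?_⟩
      rintro ⟨σ, hσ, hsubσ⟩
      rw [prevFacets_cons_ne l hne] at hσ
      rcases List.mem_cons.mp hσ with rfl | hσ'
      · exact hga hsubσ
      · exact hnc ⟨σ, hσ', hsubσ⟩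

lemma prev_sublist_mem {L L' : List (Finset V)} (hsub : L'.Sublist L) (hnd : L.Nodup) :
    ∀ {τ σ : Finset V}, τ ∈ L' → σ ∈ prevFacets L' τ → σ ∈ prevFacets L τ := by
  induction hsub with
  | slnil => intro τ σ h; simp at h
  | cons a hs ih =>
    rename_i l' l
    intro τ σ hτ hσ
    have hnd' := (List.nodup_cons.mp hnd).2
    have haτ : a ≠ τ := fun h => (List.nodup_cons.mp hnd).1 (h ▸ hs.subset hτ)
    rw [prevFacets_cons_ne l haτ]
    exact List.mem_cons_of_mem _ (ih hnd' hτ hσ)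
  | cons_cons a hs ih =>
    rename_i l' l
    intro τ σ hτ hσ
    have hnd' := (List.nodup_cons.mp hnd).2
    by_cases haτ : a = τ
    · subst haτ
      rw [prevFacets_cons_self] at hσ
      simp at hσ
    · rw [prevFacets_cons_ne l' haτ] at hσ
      rw [prevFacets_cons_ne l haτ]
      rcases List.mem_cons.mp hσ with rfl | hσ'
      · exact List.mem_cons_self
      · have hτl' : τ ∈ l' := by
          rcases List.mem_cons.mp hτ with rfl | h
          · exact absurd rfl haτ
          · exact h
        exact List.mem_cons_of_mem _ (ih hnd' hτl' hσ')

open Classical in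
/-- The restriction face `R(τ)`: vertices `v ∈ τ` such that `τ \ {v}` is covered before. -/
noncomputable def Rres (L : List (Finset V)) (τ : Finset V) : Finset V :=
  τ.filter (fun v => coveredBefore L τ (τ.erase v))

lemma mem_Rres {L : List (Finset V)} {τ : Finset V} {v : V} :
    v ∈ Rres L τ ↔ v ∈ τ ∧ coveredBefore L τ (τ.erase v) := by
  classical
  unfold Rres
  exact Finset.mem_filter

lemma Rres_subset (L : List (Finset V)) (τ : Finset V) : Rres L τ ⊆ τ :=
  fun _ hv => (mem_Rres.mp hv).1

lemma not_covered_self {L : List (Finset V)} {d : ℕ} (hcard : ∀ τ ∈ L, τ.card = d)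
    {τ : Finset V} (hτ : τ ∈ L) : ¬ coveredBefore L τ τ := by
  rintro ⟨σ, hσ, hsubσ⟩
  obtain ⟨hσL, hσne⟩ := mem_prevFacets hσ
  exact hσne (Finset.eq_of_subset_of_card_le hsubσ
    (by rw [hcard σ hσL, hcard τ hτ])).symm

section Shelling

variable {L : List (Finset V)} {d : ℕ}

lemma covered_iff (hnd : L.Nodup) (hcard : ∀ τ ∈ L, τ.card = d)
    (hshell : ∀ τ ∈ L, prevFacets L τ ≠ [] →
      IsPureDim {γ | γ ⊆ τ ∧ coveredBefore L τ γ} (d - 1))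
    {τ : Finset V} (hτ : τ ∈ L) {γ : Finset V} (hγ : γ ⊆ τ) :
    coveredBefore L τ γ ↔ ∃ v ∈ Rres L τ, v ∉ γ := by
  constructor
  · intro hcov
    have hne : prevFacets L τ ≠ [] := by
      obtain ⟨σ, hσ, -⟩ := hcov
      exact fun h => by simp [h] at hσ
    obtain ⟨t, ⟨htτ, htcov⟩, hγt, htcard⟩ := (hshell τ hτ hne).2 γ ⟨hγ, hcov⟩
    rcases Nat.eq_zero_or_pos d with hd | hd
    · exfalso
      obtain ⟨σ, hσ, -⟩ := hcov
      obtain ⟨hσL, hσne⟩ := mem_prevFacets hσ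
      have h1 : σ.card = 0 := hd ▸ hcard σ hσL
      have h2 : τ.card = 0 := hd ▸ hcard τ hτ
      exact hσne (by rw [Finset.card_eq_zero.mp h1, Finset.card_eq_zero.mp h2])
    · have hτd : τ.card = d := hcard τ hτ
      have hss : t ⊂ τ := htτ.ssubset_of_ne (by intro h; rw [h, hτd] at htcard; omega)
      obtain ⟨v, hvτ, hvt⟩ := Finset.exists_of_ssubset hss
      have hte : t = τ.erase v := by
        apply Finset.eq_of_subset_of_card_le
        · intro x hx; exact Finset.mem_erase.mpr ⟨fun h => hvt (h ▸ hx), htτ hx⟩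
        · rw [Finset.card_erase_of_mem hvτ, hτd, htcard]
      refine ⟨v, ?_, fun hvγ => hvt (hγt hvγ)⟩
      rw [mem_Rres]
      exact ⟨hvτ, hte ▸ htcov⟩
  · rintro ⟨v, hv, hvγ⟩
    rw [mem_Rres] at hv
    exact coveredBefore_mono
      (fun x hx => Finset.mem_erase.mpr ⟨fun h => hvγ (by rwa [h] at hx), hγ hx⟩) hv.2

lemma TL_eq_image (hnd : L.Nodup) (hcard : ∀ τ ∈ L, τ.card = d)
    (hshell : ∀ τ ∈ L, prevFacets L τ ≠ [] →
      IsPureDim {γ | γ ⊆ τ ∧ coveredBefore L τ γ} (d - 1))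
    {τ : Finset V} (hτ : τ ∈ L) :
    TL L τ = ↑((Rres L τ).image (τ.erase ·)) := by
  ext γ
  simp only [TL, Set.mem_setOf_eq, Finset.coe_image, Set.mem_image, Finset.mem_coe]
  constructor
  · rintro ⟨hγτ, hcov, hmax⟩
    obtain ⟨v, hv, hvγ⟩ := (covered_iff hnd hcard hshell hτ hγτ).mp hcov
    have hv' := hv
    rw [mem_Rres] at hv'
    have h1 : γ ⊆ τ.erase v := fun x hx =>
      Finset.mem_erase.mpr ⟨fun h => hvγ (by rwa [h] at hx), hγτ hx⟩
    exact ⟨v, hv, hmax (τ.erase v) h1 (Finset.erase_subset _ _) hv'.2⟩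
  · rintro ⟨v, hv, rfl⟩
    have hv' := hv
    rw [mem_Rres] at hv'
    refine ⟨Finset.erase_subset _ _, hv'.2, ?_⟩
    intro γ' h1 h2 h3
    by_contra hne
    have hpos : 0 < τ.card := Finset.card_pos.mpr ⟨v, hv'.1⟩
    have hlt := Finset.card_lt_card (h1.ssubset_of_ne (Ne.symm hne))
    rw [Finset.card_erase_of_mem hv'.1] at hlt
    have hle := Finset.card_le_card h2
    have : γ' = τ := Finset.eq_of_subset_of_card_le h2 (by omega)
    rw [this] at h3
    exact not_covered_self hcard hτ h3

lemma TL_ncard (hnd : L.Nodup) (hcard : ∀ τ ∈ L, τ.card = d)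
    (hshell : ∀ τ ∈ L, prevFacets L τ ≠ [] →
      IsPureDim {γ | γ ⊆ τ ∧ coveredBefore L τ γ} (d - 1))
    {τ : Finset V} (hτ : τ ∈ L) :
    (TL L τ).ncard = (Rres L τ).card := by
  rw [TL_eq_image hnd hcard hshell hτ, Set.ncard_coe_finset]
  apply Finset.card_image_of_injOn
  intro v hv w hw hvw
  by_contra hne
  have hvw' : τ.erase v = τ.erase w := hvw
  have hvτ : v ∈ τ := Rres_subset L τ (Finset.mem_coe.mp hv)
  have hmem : v ∈ τ.erase w := Finset.mem_erase.mpr ⟨hne, hvτ⟩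
  rw [← hvw'] at hmem
  exact (Finset.notMem_erase v τ) hmem

lemma interval_iff (hnd : L.Nodup) (hcard : ∀ τ ∈ L, τ.card = d)
    (hshell : ∀ τ ∈ L, prevFacets L τ ≠ [] →
      IsPureDim {γ | γ ⊆ τ ∧ coveredBefore L τ γ} (d - 1))
    {τ : Finset V} (hτ : τ ∈ L) {γ : Finset V} :
    (Rres L τ ⊆ γ ∧ γ ⊆ τ) ↔ (γ ⊆ τ ∧ ¬ coveredBefore L τ γ) := by
  constructor
  · rintro ⟨hR, hγτ⟩
    refine ⟨hγτ, fun hc => ?_⟩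
    obtain ⟨v, hv, hvγ⟩ := (covered_iff hnd hcard hshell hτ hγτ).mp hc
    exact hvγ (hR hv)
  · rintro ⟨hγτ, hnc⟩
    refine ⟨fun v hv => ?_, hγτ⟩
    by_contra hvγ
    exact hnc ((covered_iff hnd hcard hshell hτ hγτ).mpr ⟨v, hv, hvγ⟩)

lemma first_unique (hnd : L.Nodup) {τ₁ τ₂ γ : Finset V} (h1 : τ₁ ∈ L) (h2 : τ₂ ∈ L)
    (hγ1 : γ ⊆ τ₁) (hγ2 : γ ⊆ τ₂) (hn1 : ¬ coveredBefore L τ₁ γ)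
    (hn2 : ¬ coveredBefore L τ₂ γ) : τ₁ = τ₂ := by
  by_contra hne
  rcases mem_prevFacets_or hnd h1 h2 hne with h | h
  · exact hn2 ⟨τ₁, h, hγ1⟩
  · exact hn1 ⟨τ₂, h, hγ2⟩

open Polynomial in
lemma shelling_hvec (hnd : L.Nodup) (hcard : ∀ τ ∈ L, τ.card = d)
    (hshell : ∀ τ ∈ L, prevFacets L τ ≠ [] →
      IsPureDim {γ | γ ⊆ τ ∧ coveredBefore L τ γ} (d - 1)) :
    ∑ i ∈ Finset.range (d + 1),
        Polynomial.C (((L.toFinset.filter (fun τ => (Rres L τ).card = i)).card : ℤ)) *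
          Polynomial.X ^ i =
      ∑ i ∈ Finset.range (d + 1),
        Polynomial.C ((faceCount {γ | ∃ τ ∈ L, γ ⊆ τ} i : ℤ)) * Polynomial.X ^ i *
          (1 - Polynomial.X) ^ (d - i) := by
  classical
  have hmap : ∀ τ ∈ L.toFinset, (Rres L τ).card ∈ Finset.range (d + 1) := by
    intro τ hτ
    rw [Finset.mem_range]
    have h1 := Finset.card_le_card (Rres_subset L τ)
    rw [hcard τ (List.mem_toFinset.mp hτ)] at h1
    omega
  -- LHS = ∑ τ, X ^ |R(τ)|
  have hLHS : (∑ i ∈ Finset.range (d + 1),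
        Polynomial.C (((L.toFinset.filter (fun τ => (Rres L τ).card = i)).card : ℤ)) *
          Polynomial.X ^ i)
      = ∑ τ ∈ L.toFinset, (Polynomial.X : Polynomial ℤ) ^ (Rres L τ).card := by
    rw [← Finset.sum_fiberwise_of_maps_to hmap
      (fun τ => (Polynomial.X : Polynomial ℤ) ^ (Rres L τ).card)]
    refine Finset.sum_congr rfl fun i _ => ?_
    rw [Finset.sum_congr rfl (fun τ hτ => by rw [(Finset.mem_filter.mp hτ).2]),
      Finset.sum_const, nsmul_eq_mul, Polynomial.C_eq_natCast]
  rw [hLHS]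
  -- face counts decompose over intervals
  have hface : ∀ i, faceCount {γ | ∃ τ ∈ L, γ ⊆ τ} i
      = ∑ τ ∈ L.toFinset,
          (((τ.powerset.filter (fun γ => Rres L τ ⊆ γ)).filter
            (fun γ => γ.card = i)).card) := by
    intro i
    have hset : {s | s ∈ {γ | ∃ τ ∈ L, γ ⊆ τ} ∧ s.card = i}
        = ↑(L.toFinset.biUnion (fun τ =>
            (τ.powerset.filter (fun γ => Rres L τ ⊆ γ)).filter (fun γ => γ.card = i))) := by
      ext s
      simp only [Set.mem_setOf_eq, Finset.coe_biUnion, Set.mem_iUnion, Finset.mem_coe,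
        Finset.mem_filter, Finset.mem_powerset, List.mem_toFinset]
      constructor
      · rintro ⟨⟨τ, hτ, hsτ⟩, hcd⟩
        obtain ⟨τ', hτ', hsτ', hnc⟩ := exists_first ⟨τ, hτ, hsτ⟩
        have hint := (interval_iff hnd hcard hshell hτ').mpr ⟨hsτ', hnc⟩
        exact ⟨τ', hτ', ⟨⟨hsτ', hint.1⟩, hcd⟩⟩
      · rintro ⟨τ, hτ, ⟨⟨hsτ, -⟩, hcd⟩⟩
        exact ⟨⟨τ, hτ, hsτ⟩, hcd⟩
    rw [faceCount, hset, Set.ncard_coe_finset]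
    apply Finset.card_biUnion
    intro τ1 h1 τ2 h2 hne
    rw [Function.onFun, Finset.disjoint_left]
    rintro γ hγ1 hγ2
    simp only [Finset.mem_filter, Finset.mem_powerset] at hγ1 hγ2
    have a1 := (interval_iff hnd hcard hshell (List.mem_toFinset.mp h1)).mp
      ⟨hγ1.1.2, hγ1.1.1⟩
    have a2 := (interval_iff hnd hcard hshell (List.mem_toFinset.mp h2)).mp
      ⟨hγ2.1.2, hγ2.1.1⟩
    exact hne (first_unique hnd (List.mem_toFinset.mp h1) (List.mem_toFinset.mp h2)
      a1.1 a2.1 a1.2 a2.2)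
  -- RHS = ∑ τ, X ^ |R(τ)|
  have hRHS : (∑ i ∈ Finset.range (d + 1),
        Polynomial.C ((faceCount {γ | ∃ τ ∈ L, γ ⊆ τ} i : ℤ)) * Polynomial.X ^ i *
          (1 - Polynomial.X) ^ (d - i))
      = ∑ τ ∈ L.toFinset, (Polynomial.X : Polynomial ℤ) ^ (Rres L τ).card := by
    have hstep1 : ∀ i ∈ Finset.range (d + 1),
        Polynomial.C ((faceCount {γ | ∃ τ ∈ L, γ ⊆ τ} i : ℤ)) * Polynomial.X ^ i *
          (1 - Polynomial.X) ^ (d - i)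
        = ∑ τ ∈ L.toFinset,
            ∑ γ ∈ (τ.powerset.filter (fun γ => Rres L τ ⊆ γ)).filter (fun γ => γ.card = i),
              (Polynomial.X : Polynomial ℤ) ^ γ.card * (1 - Polynomial.X) ^ (d - γ.card) := by
      intro i _
      rw [hface i, Nat.cast_sum, map_sum, Finset.sum_mul, Finset.sum_mul]
      refine Finset.sum_congr rfl fun τ hτ => ?_
      rw [Finset.sum_congr rfl (fun γ hγ => by
        rw [(Finset.mem_filter.mp hγ).2]),
        Finset.sum_const, nsmul_eq_mul, Polynomial.C_eq_natCast, mul_assoc]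
    rw [Finset.sum_congr rfl hstep1, Finset.sum_comm]
    refine Finset.sum_congr rfl fun τ hτ => ?_
    have hτL : τ ∈ L := List.mem_toFinset.mp hτ
    have hτd : τ.card = d := hcard τ hτL
    -- regroup by cardinality
    have hmap2 : ∀ γ ∈ τ.powerset.filter (fun γ => Rres L τ ⊆ γ),
        γ.card ∈ Finset.range (d + 1) := by
      intro γ hγ
      rw [Finset.mem_range]
      have := Finset.card_le_card (Finset.mem_powerset.mp (Finset.mem_filter.mp hγ).1)
      omega
    rw [Finset.sum_congr rfl (fun i _ => by
        rw [show ((τ.powerset.filter (fun γ => Rres L τ ⊆ γ)).filter (fun γ => γ.card = i))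
          = ((τ.powerset.filter (fun γ => Rres L τ ⊆ γ)).filter (fun γ => γ.card = i)) from rfl]),
      Finset.sum_fiberwise_of_maps_to hmap2
        (fun γ => (Polynomial.X : Polynomial ℤ) ^ γ.card * (1 - Polynomial.X) ^ (d - γ.card))]
    -- bijection with subsets of τ \ R(τ)
    have hRτ : Rres L τ ⊆ τ := Rres_subset L τ
    have hrd : (Rres L τ).card ≤ d := by
      have := Finset.card_le_card hRτ; omega
    have hbij : ∑ γ ∈ τ.powerset.filter (fun γ => Rres L τ ⊆ γ),
        (Polynomial.X : Polynomial ℤ) ^ γ.card * (1 - Polynomial.X) ^ (d - γ.card)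
        = ∑ S ∈ (τ \ Rres L τ).powerset,
            (Polynomial.X : Polynomial ℤ) ^ (S.card + (Rres L τ).card) *
              (1 - Polynomial.X) ^ ((d - (Rres L τ).card) - S.card) := by
      refine Finset.sum_nbij' (fun γ => γ \ Rres L τ) (fun S => S ∪ Rres L τ)
        ?_ ?_ ?_ ?_ ?_
      · intro γ hγ
        simp only [Finset.mem_filter, Finset.mem_powerset] at hγ ⊢
        exact Finset.sdiff_subset_sdiff hγ.1 Finset.Subset.rfl
      · intro S hS
        simp only [Finset.mem_filter, Finset.mem_powerset] at hS ⊢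
        constructor
        · exact Finset.union_subset ((hS.trans (Finset.sdiff_subset))) hRτ
        · exact Finset.subset_union_right
      · intro γ hγ
        simp only [Finset.mem_filter, Finset.mem_powerset] at hγ
        exact Finset.sdiff_union_of_subset hγ.2
      · intro S hS
        simp only [Finset.mem_powerset] at hS
        exact Finset.union_sdiff_cancel_right
          (Finset.disjoint_of_subset_left hS (Finset.sdiff_disjoint))
      · intro γ hγ
        simp only [Finset.mem_filter, Finset.mem_powerset] at hγ
        have h1 := Finset.card_le_card hγ.2
        have hγd : γ.card ≤ d := by
          have := Finset.card_le_card hγ.1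
          omega
        have h2 : (γ \ Rres L τ).card = γ.card - (Rres L τ).card :=
          Finset.card_sdiff_of_subset hγ.2
        have e1 : (γ \ Rres L τ).card + (Rres L τ).card = γ.card := by omega
        have e2 : (d - (Rres L τ).card) - (γ \ Rres L τ).card = d - γ.card := by omega
        rw [e1, e2]
    rw [hbij]
    have hTcard : (τ \ Rres L τ).card = d - (Rres L τ).card := by
      rw [Finset.card_sdiff_of_subset hRτ, hτd]
    have hprod := Finset.prod_add (fun _ : V => (Polynomial.X : Polynomial ℤ))
      (fun _ : V => (1 - Polynomial.X : Polynomial ℤ)) (τ \ Rres L τ)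
    simp only [Finset.prod_const] at hprod
    have hone : ((Polynomial.X : Polynomial ℤ) + (1 - Polynomial.X)) ^ (τ \ Rres L τ).card
        = 1 := by ring_nf
    rw [hone] at hprod
    calc ∑ S ∈ (τ \ Rres L τ).powerset,
          (Polynomial.X : Polynomial ℤ) ^ (S.card + (Rres L τ).card) *
            (1 - Polynomial.X) ^ ((d - (Rres L τ).card) - S.card)
        = (Polynomial.X : Polynomial ℤ) ^ (Rres L τ).card *
            ∑ S ∈ (τ \ Rres L τ).powerset,
              (Polynomial.X : Polynomial ℤ) ^ S.card *
                (1 - Polynomial.X) ^ ((τ \ Rres L τ) \ S).card := by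
          rw [Finset.mul_sum]
          refine Finset.sum_congr rfl fun S hS => ?_
          rw [Finset.mem_powerset] at hS
          rw [Finset.card_sdiff_of_subset hS, hTcard, pow_add]
          ring
      _ = (Polynomial.X : Polynomial ℤ) ^ (Rres L τ).card * 1 := by
          rw [← hprod]
      _ = (Polynomial.X : Polynomial ℤ) ^ (Rres L τ).card := mul_one _
  rw [hRHS]

end Shelling

end Subshell

/-- If `L` is a shelling of the `(d-1)`-dimensional complex `Γ`, `K` is a
subset of the facets, and the ordering `L'` of `K` inherited from `L` satisfies
`T_{L'}(τ) = T_L(τ)` for all `τ ∈ K`, then `Γ' = ∪_{τ ∈ K} τ̄` is a shellable subcomplex of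
`Γ` (with shelling `L'`) whose h-vector is `h'_i = |{τ ∈ K : |T_L(τ)| = i}|`. -/
theorem subshelling {V : Type*} [DecidableEq V] (Γ : Set (Finset V)) (d : ℕ)
    (L : List (Finset V)) (hΓ : IsComplex Γ) (hL : IsShelling Γ d L)
    (K : Set (Finset V)) (hK : ∀ τ ∈ K, τ ∈ L)
    (L' : List (Finset V)) (hsub : L'.Sublist L) (hmem : ∀ τ, τ ∈ L' ↔ τ ∈ K)
    (hT : ∀ τ ∈ L', TL L' τ = TL L τ) :
    IsComplex {γ | ∃ τ ∈ L', γ ⊆ τ} ∧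
    {γ | ∃ τ ∈ L', γ ⊆ τ} ⊆ Γ ∧
    IsShelling {γ | ∃ τ ∈ L', γ ⊆ τ} d L' ∧
    IsHVector {γ | ∃ τ ∈ L', γ ⊆ τ} d
      (fun i => ({τ | τ ∈ K ∧ (TL L τ).ncard = i}.ncard : ℤ)) := by
  classical
  obtain ⟨hnd, hfac, hcov, hshell⟩ := hL
  have hcard : ∀ τ ∈ L, τ.card = d := fun τ hτ => ((hfac τ).mp hτ).2
  have hnd' : L'.Nodup := hsub.nodup hnd
  have hcard' : ∀ τ ∈ L', τ.card = d := fun τ hτ => hcard τ (hsub.subset hτ)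
  -- transfer of covered sets
  have hcovset : ∀ τ ∈ L', {γ | γ ⊆ τ ∧ coveredBefore L' τ γ}
      = {γ | γ ⊆ τ ∧ coveredBefore L τ γ} := by
    intro τ hτ
    have hτL : τ ∈ L := hsub.subset hτ
    ext γ
    simp only [Set.mem_setOf_eq]
    constructor
    · rintro ⟨hγτ, σ, hσ, hγσ⟩
      exact ⟨hγτ, σ, Subshell.prev_sublist_mem hsub hnd hτ hσ, hγσ⟩
    · rintro ⟨hγτ, hc⟩
      refine ⟨hγτ, ?_⟩
      obtain ⟨v, hv, hvγ⟩ :=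
        (Subshell.covered_iff hnd hcard hshell hτL hγτ).mp hc
      have hvR := hv
      rw [Subshell.mem_Rres] at hvR
      have hmemTL : τ.erase v ∈ TL L τ := by
        rw [Subshell.TL_eq_image hnd hcard hshell hτL]
        exact Finset.mem_coe.mpr (Finset.mem_image_of_mem _ hv)
      rw [← hT τ hτ] at hmemTL
      exact Subshell.coveredBefore_mono
        (fun x hx => Finset.mem_erase.mpr ⟨fun h => hvγ (by rwa [h] at hx), hγτ hx⟩)
        hmemTL.2.1
  -- the subcomplex shelling condition
  have hshell' : ∀ τ ∈ L', prevFacets L' τ ≠ [] →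
      IsPureDim {γ | γ ⊆ τ ∧ coveredBefore L' τ γ} (d - 1) := by
    intro τ hτ hne
    have hτL : τ ∈ L := hsub.subset hτ
    have hneL : prevFacets L τ ≠ [] := by
      obtain ⟨σ, hσ⟩ := List.exists_mem_of_ne_nil _ hne
      exact List.ne_nil_of_mem (Subshell.prev_sublist_mem hsub hnd hτ hσ)
    rw [hcovset τ hτ]
    exact hshell τ hτL hneL
  refine ⟨?_, ?_, ?_, ?_⟩
  · -- IsComplex
    rintro s ⟨τ, hτ, hsτ⟩ t hts
    exact ⟨τ, hτ, hts.trans hsτ⟩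
  · -- subset of Γ
    rintro γ ⟨τ, hτ, hγτ⟩
    have hτΓ : τ ∈ Γ := ((hfac τ).mp (hsub.subset hτ)).1
    exact hΓ τ hτΓ γ hγτ
  · -- IsShelling
    refine ⟨hnd', ?_, ?_, hshell'⟩
    · intro τ
      constructor
      · intro hτ
        exact ⟨⟨τ, hτ, Finset.Subset.rfl⟩, hcard' τ hτ⟩
      · rintro ⟨⟨σ, hσ, hτσ⟩, hτd⟩
        have : τ = σ := Finset.eq_of_subset_of_card_le hτσ
          (by rw [hcard' σ hσ, hτd])
        exact this ▸ hσ
    · rintro s ⟨τ, hτ, hsτ⟩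
      exact ⟨τ, hτ, hsτ⟩
  · -- IsHVector
    unfold IsHVector
    have hcoef : ∀ i : ℕ, ({τ | τ ∈ K ∧ (TL L τ).ncard = i}.ncard : ℤ)
        = ((L'.toFinset.filter (fun τ => (Subshell.Rres L' τ).card = i)).card : ℤ) := by
      intro i
      congr 1
      have : {τ | τ ∈ K ∧ (TL L τ).ncard = i}
          = ↑(L'.toFinset.filter (fun τ => (Subshell.Rres L' τ).card = i)) := by
        ext τ
        simp only [Set.mem_setOf_eq, Finset.coe_filter, List.mem_toFinset]
        constructor
        · rintro ⟨hτK, hi⟩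
          have hτ : τ ∈ L' := (hmem τ).mpr hτK
          refine ⟨hτ, ?_⟩
          rw [← Subshell.TL_ncard hnd' hcard' hshell' hτ, hT τ hτ]
          exact hi
        · rintro ⟨hτ, hi⟩
          refine ⟨(hmem τ).mp hτ, ?_⟩
          rw [← hT τ hτ, Subshell.TL_ncard hnd' hcard' hshell' hτ]
          exact hi
      rw [this, Set.ncard_coe_finset]
    calc ∑ i ∈ Finset.range (d + 1),
          Polynomial.C (({τ | τ ∈ K ∧ (TL L τ).ncard = i}.ncard : ℤ)) * Polynomial.X ^ i
        = ∑ i ∈ Finset.range (d + 1),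
            Polynomial.C (((L'.toFinset.filter
              (fun τ => (Subshell.Rres L' τ).card = i)).card : ℤ)) * Polynomial.X ^ i := by
          refine Finset.sum_congr rfl fun i _ => ?_
          rw [hcoef i]
      _ = _ := Subshell.shelling_hvec hnd' hcard' hshell'
end

section
/- Let Λ = Λ(l; p_1, …, p_m), let S = S(∞^{n−d−m}, p_1−1, …, p_m−1), let L = (τ_1, …, τ_t) be a shelling of skel_d(Λ), and let σ be a bijection from the set of facets of skel_d(Λ) to S^d (the monomials of S of total degree at most d) such that: deg(σ(τ_i)) = |T_L(τ_i)| for all i, and whenever γ ∈ T_L(τ_i) there exist j < i and a divisor μ of σ(τ_i) with γ ⊆ τ_j, deg(μ) = deg(σ(τ_j)), and σ(τ_j) ≤ μ in reverse lexicographic order. Let M ⊆ S^d be a multicomplex that is reverse-lex compressed, i.e., whenever deg(μ) = deg(μ'), μ < μ' in reverse lex order, and μ' ∈ M, then μ ∈ M. Let L^M be the restriction of L to σ^{−1}(M). Then T_{L^M}(τ) = T_L(τ) for each τ ∈ σ^{−1}(M), so L^M is a shelling of the subcomplex ∪_{τ ∈ σ^{−1}(M)} τ̄ of skel_d(Λ),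 and the h-vector of this subcomplex equals the F-vector of M. -/
open Finset

section aux
variable {V : Type*} [DecidableEq V]

lemma prevFacets_sublist (L : List (Finset V)) (τ : Finset V) : (prevFacets L τ).Sublist L :=
  (List.takeWhile_prefix _).sublist

lemma not_mem_prevFacets (L : List (Finset V)) (τ : Finset V) : τ ∉ prevFacets L τ := by
  intro h
  have := List.mem_takeWhile_imp h
  simp at this

lemma prevFacets_cons_of_ne {a τ : Finset V} (L : List (Finset V)) (h : a ≠ τ) :
    prevFacets (a :: L) τ = a :: prevFacets L τ := by
  simp [prevFacets, List.takeWhile_cons, h]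

lemma prevFacets_cons_self (L : List (Finset V)) (τ : Finset V) :
    prevFacets (τ :: L) τ = [] := by
  simp [prevFacets, List.takeWhile_cons]

lemma prevFacets_append_cons {τ : Finset V} (P Q : List (Finset V)) (h : τ ∉ P) :
    prevFacets (P ++ τ :: Q) τ = P := by
  induction P with
  | nil => simp [prevFacets_cons_self]
  | cons a P ih =>
    have ha : a ≠ τ := fun e => h (e ▸ List.mem_cons_self (a := a) (l := P))
    rw [List.cons_append, prevFacets_cons_of_ne _ ha, ih (fun hm => h (List.mem_cons_of_mem _ hm))]

lemma exists_prefix {L : List (Finset V)} {τ : Finset V} (h : τ ∈ L) :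
    ∃ P Q, L = P ++ τ :: Q ∧ τ ∉ P := by
  induction L with
  | nil => simp at h
  | cons a L ih =>
    by_cases ha : a = τ
    · exact ⟨[], L, by simp [ha], by simp⟩
    · rcases ih (by rcases List.mem_cons.1 h with h | h; exact absurd h.symm ha; exact h) with
        ⟨P, Q, rfl, hP⟩
      exact ⟨a :: P, Q, rfl, by simp [hP, Ne.symm ha]⟩

lemma sublist_prevFacets_sublist {LM L : List (Finset V)} (hs : LM.Sublist L)
    (hnd : L.Nodup) {τ : Finset V} (hτ : τ ∈ LM) :
    (prevFacets LM τ).Sublist (prevFacets L τ) := by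
  induction hs with
  | slnil => simp at hτ
  | @cons l₁ l₂ a h ih =>
    have hτ' : τ ∈ l₁ := hτ
    have ha : a ≠ τ := by
      rintro rfl
      exact (List.nodup_cons.1 hnd).1 (h.subset hτ')
    rw [prevFacets_cons_of_ne _ ha]
    exact (ih (List.nodup_cons.1 hnd).2 hτ').trans (List.sublist_cons_self _ _)
  | @cons_cons l₁ l₂ a h ih =>
    by_cases ha : a = τ
    · subst ha; simp [prevFacets_cons_self]
    · rcases List.mem_cons.1 hτ with h' | h'
      · exact absurd h'.symm ha
      · rw [prevFacets_cons_of_ne _ ha, prevFacets_cons_of_ne _ ha]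
        exact (ih (List.nodup_cons.1 hnd).2 h').cons_cons a

lemma mem_prevFacets_of_sublist {LM L : List (Finset V)} (hs : LM.Sublist L)
    (hnd : L.Nodup) {τ τ' : Finset V} (hτ : τ ∈ LM) (hτ' : τ' ∈ LM)
    (h : τ' ∈ prevFacets L τ) : τ' ∈ prevFacets LM τ := by
  induction hs with
  | slnil => simp at hτ
  | @cons l₁ l₂ a hsub ih =>
    have ha : a ≠ τ := by
      rintro rfl
      exact (List.nodup_cons.1 hnd).1 (hsub.subset hτ)
    rw [prevFacets_cons_of_ne _ ha] at h
    rcases List.mem_cons.1 h with h | h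
    · exact absurd (h ▸ hsub.subset hτ') (List.nodup_cons.1 hnd).1
    · exact ih (List.nodup_cons.1 hnd).2 hτ hτ' h
  | @cons_cons l₁ l₂ a hsub ih =>
    by_cases ha : a = τ
    · subst ha; rw [prevFacets_cons_self] at h; simp at h
    · rw [prevFacets_cons_of_ne _ ha] at h ⊢
      rcases List.mem_cons.1 h with h | h
      · exact h ▸ List.mem_cons_self (a := a) (l := prevFacets l₁ τ)
      · rcases List.mem_cons.1 hτ' with h' | h'
        · exact absurd (h' ▸ h) (fun hh => (List.nodup_cons.1 hnd).1 ((prevFacets_sublist l₂ τ).subset hh))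
        · rcases List.mem_cons.1 hτ with hτ2 | hτ2
          · exact absurd hτ2.symm ha
          · exact List.mem_cons_of_mem _ (ih (List.nodup_cons.1 hnd).2 hτ2 h' h)

/-- faces spanned by a list of facets -/
def facesOf (P : List (Finset V)) : Finset (Finset V) :=
  P.foldr (fun τ acc => τ.powerset ∪ acc) ∅

lemma mem_facesOf {P : List (Finset V)} {γ : Finset V} :
    γ ∈ facesOf P ↔ ∃ τ ∈ P, γ ⊆ τ := by
  induction P with
  | nil => simp [facesOf]
  | cons a P ih =>
    simp only [facesOf, List.foldr_cons] at ih ⊢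
    simp [ih, List.mem_cons, or_and_right, exists_or, exists_eq_or_imp]

lemma facesOf_append (P Q : List (Finset V)) :
    facesOf (P ++ Q) = facesOf P ∪ facesOf Q := by
  induction P with
  | nil => simp [facesOf]
  | cons a P ih =>
    simp only [facesOf, List.cons_append, List.foldr_cons] at ih ⊢
    rw [ih, union_assoc]

end aux

open Polynomial in
lemma sum_pow_one_sub (V : Type*) [DecidableEq V] (t : Finset V) :
    ∑ s ∈ t.powerset, (X : ℤ[X]) ^ s.card * (1 - X) ^ (t.card - s.card) = 1 := by
  have h := Finset.prod_add (fun _ : V => (X : ℤ[X])) (fun _ => 1 - X) t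
  simp only [prod_const] at h
  have h2 : ∀ s ∈ t.powerset, (X : ℤ[X]) ^ s.card * (1 - X) ^ ((t \ s).card)
      = X ^ s.card * (1 - X) ^ (t.card - s.card) := by
    intro s hs
    rw [card_sdiff_of_subset (mem_powerset.1 hs)]
  rw [← Finset.sum_congr rfl h2, ← h]
  simp


/-- Given a shelling `L` of `skel_d(Λ)` and a bijection `σ` from its facets
to `S^d` with the stated properties, and a reverse-lex compressed multicomplex `M ⊆ S^d`,
the restriction `L^M` of `L` to `σ⁻¹(M)` satisfies `T_{L^M}(τ) = T_L(τ)` for `τ ∈ σ⁻¹(M)`,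
is a shelling of `∪_{τ ∈ σ⁻¹(M)} τ̄`, and the h-vector of this subcomplex is `F(M)`. -/
theorem restricted_shelling {l m n d : ℕ} (p : Fin m → ℕ)
    (hp : ∀ i, 2 ≤ p i) (hn : n = l + ∑ i, p i) (hd : d ≤ n - m)
    (L : List (Finset (LamVert l p)))
    (hL : IsShelling (skel l p d) d L)
    (σ : Finset (LamVert l p) → Mono (n - d))
    (hσ : Set.BijOn σ (skelFacets l p d) (SBoundDeg (lamBounds n d m p) d))
    (hdeg : ∀ τ ∈ L, mDeg (σ τ) = (TL L τ).ncard)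
    (hprop : ∀ τ ∈ L, ∀ γ ∈ TL L τ, ∃ τ' ∈ prevFacets L τ, ∃ μ : Mono (n - d),
        mDvd μ (σ τ) ∧ γ ⊆ τ' ∧ mDeg μ = mDeg (σ τ') ∧ (σ τ' = μ ∨ mRlexLt (σ τ') μ))
    (M : Set (Mono (n - d)))
    (hM : IsMulticomplex (lamBounds n d m p) M)
    (hMd : M ⊆ SBoundDeg (lamBounds n d m p) d)
    (hcomp : ∀ μ ν, mDeg μ = mDeg ν → mRlexLt μ ν → ν ∈ M → μ ∈ M)
    (LM : List (Finset (LamVert l p)))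
    (hsubl : LM.Sublist L) (hmem : ∀ τ, τ ∈ LM ↔ τ ∈ L ∧ σ τ ∈ M) :
    (∀ τ ∈ LM, TL LM τ = TL L τ) ∧
    IsShelling {γ | ∃ τ ∈ LM, γ ⊆ τ} d LM ∧
    IsHVector {γ | ∃ τ ∈ LM, γ ⊆ τ} d (fun i => (FVec M i : ℤ)) := by
  classical
  obtain ⟨hndL, hfacL, hcovL, hpureL⟩ := hL
  have hndM : LM.Nodup := hsubl.nodup hndL
  have hcardL : ∀ τ ∈ L, τ.card = d := fun τ h => ((hfacL τ).1 h).2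
  have hLMsubL : ∀ τ ∈ LM, τ ∈ L := fun τ h => ((hmem τ).1 h).1
  have hcardM : ∀ τ ∈ LM, τ.card = d := fun τ h => hcardL τ (hLMsubL τ h)
  -- covered-LM → covered-L
  have key1' : ∀ τ ∈ LM, ∀ γ, coveredBefore LM τ γ → coveredBefore L τ γ := by
    rintro τ hτ γ ⟨τ', h1, h2⟩
    exact ⟨τ', (sublist_prevFacets_sublist hsubl hndL hτ).subset h1, h2⟩
  -- covered-L → covered-LM (uses hprop, multicomplex, compression)
  have key1 : ∀ τ ∈ LM, ∀ γ, γ ⊆ τ → coveredBefore L τ γ → coveredBefore LM τ γ := by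
    intro τ hτ γ hγτ hcov
    have hτL : τ ∈ L := hLMsubL τ hτ
    set F := τ.powerset.filter (fun g => γ ⊆ g ∧ coveredBefore L τ g) with hF
    have hne : F.Nonempty := ⟨γ, by simp [hF, hγτ, hcov]⟩
    obtain ⟨b, hbF, hbmax⟩ := F.exists_max_image Finset.card hne
    simp only [hF, mem_filter, mem_powerset] at hbF
    have hbTL : b ∈ TL L τ := by
      refine ⟨hbF.1, hbF.2.2, fun γ' h1 h2 h3 => ?_⟩
      have hγ'F : γ' ∈ F := by
        simp only [hF, mem_filter, mem_powerset]
        exact ⟨h2, hbF.2.1.trans h1, h3⟩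
      exact (Finset.eq_of_subset_of_card_le h1 (hbmax γ' hγ'F)).symm
    obtain ⟨τ', hτ'prev, μ, hμdvd, hbsub, hμdeg, hμord⟩ := hprop τ hτL b hbTL
    have hστM : σ τ ∈ M := ((hmem τ).1 hτ).2
    have hμM : μ ∈ M := hM.2.2 (σ τ) hστM μ hμdvd
    have hστ'M : σ τ' ∈ M := by
      rcases hμord with h | h
      · exact h ▸ hμM
      · exact hcomp (σ τ') μ hμdeg.symm h hμM
    have hτ'L : τ' ∈ L := (prevFacets_sublist L τ).subset hτ'prev
    have hτ'LM : τ' ∈ LM := (hmem τ').2 ⟨hτ'L, hστ'M⟩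
    exact ⟨τ', mem_prevFacets_of_sublist hsubl hndL hτ hτ'LM hτ'prev,
      hbF.2.1.trans hbsub⟩
  have hcovIff : ∀ τ ∈ LM, ∀ γ, γ ⊆ τ → (coveredBefore LM τ γ ↔ coveredBefore L τ γ) :=
    fun τ hτ γ hγ => ⟨key1' τ hτ γ, key1 τ hτ γ hγ⟩
  have hcovEq : ∀ τ ∈ LM,
      {γ : Finset (LamVert l p) | γ ⊆ τ ∧ coveredBefore LM τ γ} =
      {γ | γ ⊆ τ ∧ coveredBefore L τ γ} := by
    intro τ hτ
    ext γ
    exact and_congr_right fun hγ => hcovIff τ hτ γ hγ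
  -- Conjunct 1
  have hTL : ∀ τ ∈ LM, TL LM τ = TL L τ := by
    intro τ hτ
    ext γ
    constructor
    · rintro ⟨h1, h2, h3⟩
      exact ⟨h1, (hcovIff τ hτ γ h1).1 h2, fun γ' u1 u2 u3 =>
        h3 γ' u1 u2 ((hcovIff τ hτ γ' u2).2 u3)⟩
    · rintro ⟨h1, h2, h3⟩
      exact ⟨h1, (hcovIff τ hτ γ h1).2 h2, fun γ' u1 u2 u3 =>
        h3 γ' u1 u2 ((hcovIff τ hτ γ' u2).1 u3)⟩
  -- τ is never covered before itself
  have hnotcov : ∀ τ ∈ LM, ¬ coveredBefore LM τ τ := by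
    rintro τ hτ ⟨τ', h1, h2⟩
    have hτ'LM : τ' ∈ LM := (prevFacets_sublist LM τ).subset h1
    have : τ = τ' := Finset.eq_of_subset_of_card_le h2
      (by rw [hcardM τ hτ, hcardM τ' hτ'LM])
    exact not_mem_prevFacets LM τ (this ▸ h1)
  -- purity for LM
  have hpureM : ∀ τ ∈ LM, prevFacets LM τ ≠ [] →
      IsPureDim {γ : Finset (LamVert l p) | γ ⊆ τ ∧ coveredBefore LM τ γ} (d - 1) := by
    intro τ hτ hne
    obtain ⟨x, hx⟩ := List.exists_mem_of_ne_nil _ hne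
    have hxL : x ∈ prevFacets L τ :=
      (sublist_prevFacets_sublist hsubl hndL hτ).subset hx
    rw [hcovEq τ hτ]
    exact hpureL τ (hLMsubL τ hτ) (List.ne_nil_of_mem hxL)
  -- the restriction set R(τ) and its cardinality
  set R : Finset (LamVert l p) → Finset (LamVert l p) :=
    fun τ => τ.filter (fun v => coveredBefore LM τ (τ.erase v)) with hRdef
  have hRsub : ∀ τ, R τ ⊆ τ := fun τ => filter_subset _ _
  -- KEY: for γ ⊆ τ, covered ↔ ¬ R τ ⊆ γ
  have hKEYf : ∀ τ ∈ LM, ∀ γ, γ ⊆ τ → coveredBefore LM τ γ →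
      ∃ v ∈ R τ, γ ⊆ τ.erase v := by
    intro τ hτ γ hγτ hcov
    obtain ⟨τ0, hτ0, -⟩ := id hcov
    have hpne : prevFacets LM τ ≠ [] := List.ne_nil_of_mem hτ0
    obtain ⟨-, hpure2⟩ := hpureM τ hτ hpne
    obtain ⟨t, ⟨htτ, htcov⟩, hγt, htcard⟩ := hpure2 γ ⟨hγτ, hcov⟩
    have hd1 : 1 ≤ d := by
      by_contra hd0
      have : d = 0 := by omega
      have hγτ' : γ = τ := Finset.eq_of_subset_of_card_le hγτ
        (by rw [hcardM τ hτ, this]; omega)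
      exact hnotcov τ hτ (hγτ' ▸ hcov)
    have htne : t ≠ τ := by
      intro h
      rw [h, hcardM τ hτ] at htcard
      omega
    obtain ⟨v, hvτ, hvt⟩ : ∃ v ∈ τ, v ∉ t := by
      by_contra hcon
      push_neg at hcon
      exact htne (Finset.Subset.antisymm htτ hcon)
    have hteq : t = τ.erase v := by
      refine Finset.eq_of_subset_of_card_le (fun x hx => Finset.mem_erase.2
        ⟨fun he => hvt (he ▸ hx), htτ hx⟩) ?_
      rw [Finset.card_erase_of_mem hvτ, hcardM τ hτ, htcard]
    have hvR : v ∈ R τ := by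
      rw [hRdef]
      simp only [mem_filter]
      exact ⟨hvτ, hteq ▸ htcov⟩
    exact ⟨v, hvR, hteq ▸ hγt⟩
  have hKEY : ∀ τ ∈ LM, ∀ γ, γ ⊆ τ → (coveredBefore LM τ γ ↔ ¬ R τ ⊆ γ) := by
    intro τ hτ γ hγτ
    constructor
    · intro hcov hRγ
      obtain ⟨v, hvR, hγe⟩ := hKEYf τ hτ γ hγτ hcov
      exact (Finset.mem_erase.1 (hγe (hRγ hvR))).1 rfl
    · intro hnR
      obtain ⟨v, hvR, hvγ⟩ := Finset.not_subset.1 hnR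
      have hcove : coveredBefore LM τ (τ.erase v) := (Finset.mem_filter.1 hvR).2
      obtain ⟨τ', h1, h2⟩ := hcove
      exact ⟨τ', h1, (Finset.subset_erase.2 ⟨hγτ, hvγ⟩).trans h2⟩
  -- TL LM τ as an image, and its cardinality
  have hTLcard : ∀ τ ∈ LM, (TL LM τ).ncard = (R τ).card := by
    intro τ hτ
    have himg : TL LM τ = ↑((R τ).image (fun v => τ.erase v)) := by
      ext γ
      constructor
      · rintro ⟨h1, h2, h3⟩
        obtain ⟨v, hvR, hγe⟩ := hKEYf τ hτ γ h1 h2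
        have : τ.erase v = γ := h3 _ hγe (Finset.erase_subset _ _)
          (Finset.mem_filter.1 hvR).2
        simp only [coe_image, Set.mem_image, mem_coe]
        exact ⟨v, hvR, this⟩
      · intro hγ
        simp only [coe_image, Set.mem_image, mem_coe] at hγ
        obtain ⟨v, hvR, rfl⟩ := hγ
        have hvτ : v ∈ τ := (Finset.mem_filter.1 hvR).1
        refine ⟨Finset.erase_subset _ _, (Finset.mem_filter.1 hvR).2,
          fun γ' u1 u2 u3 => ?_⟩
        by_cases hvγ' : v ∈ γ'
        · exfalso
          have : τ ⊆ γ' := by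
            intro x hx
            by_cases hxv : x = v
            · exact hxv ▸ hvγ'
            · exact u1 (Finset.mem_erase.2 ⟨hxv, hx⟩)
          have : γ' = τ := Finset.Subset.antisymm u2 this
          exact hnotcov τ hτ (this ▸ u3)
        · exact Finset.Subset.antisymm (fun x hx =>
            Finset.mem_erase.2 ⟨fun he => hvγ' (he ▸ hx), u2 hx⟩) u1
    rw [himg, Set.ncard_coe_finset]
    apply Finset.card_image_of_injOn
    intro v hv w hw hvw
    by_contra hne
    have hvτ : v ∈ τ := (Finset.mem_filter.1 hv).1
    have : v ∈ τ.erase w := Finset.mem_erase.2 ⟨hne, hvτ⟩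
    have hvw' : τ.erase v = τ.erase w := hvw
    rw [← hvw'] at this
    exact (Finset.mem_erase.1 this).1 rfl
  have hdegR : ∀ τ ∈ LM, mDeg (σ τ) = (R τ).card := by
    intro τ hτ
    rw [hdeg τ (hLMsubL τ hτ), ← hTL τ hτ, hTLcard τ hτ]
  have hRle : ∀ τ ∈ LM, (R τ).card ≤ d := fun τ hτ =>
    (hcardM τ hτ) ▸ Finset.card_le_card (hRsub τ)
  refine ⟨hTL, ⟨hndM, ?_, ?_, ?_⟩, ?_⟩
  · -- facet characterization
    intro τ
    constructor
    · intro hτ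
      exact ⟨⟨τ, hτ, Finset.Subset.refl τ⟩, hcardM τ hτ⟩
    · rintro ⟨⟨t, htLM, hτt⟩, hτd⟩
      have : τ = t := Finset.eq_of_subset_of_card_le hτt
        (by rw [hτd, hcardM t htLM])
      exact this ▸ htLM
  · exact fun s hs => hs
  · -- purity
    intro τ hτ hne
    exact hpureM τ hτ hne
  · -- h-vector
    have hstar : ∀ P : List (Finset (LamVert l p)), (∃ Q, LM = P ++ Q) →
        ∑ γ ∈ facesOf P,
            (Polynomial.X : Polynomial ℤ) ^ γ.card * (1 - Polynomial.X) ^ (d - γ.card)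
          = (P.map (fun τ => (Polynomial.X : Polynomial ℤ) ^ (R τ).card)).sum := by
      intro P
      induction P using List.reverseRecOn with
      | nil => intro _; simp [facesOf]
      | append_singleton P τ ih =>
        rintro ⟨Q, hQ⟩
        have hQ' : LM = P ++ τ :: Q := by simpa using hQ
        have hτLM : τ ∈ LM := by
          rw [hQ']; exact List.mem_append_right _ List.mem_cons_self
        have hτP : τ ∉ P := by
          intro hmem'
          have hnd := hndM
          rw [hQ'] at hnd
          exact (List.disjoint_of_nodup_append hnd) hmem' List.mem_cons_self
        have hprev : prevFacets LM τ = P := by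
          rw [hQ']; exact prevFacets_append_cons P Q hτP
        have ihs := ih ⟨τ :: Q, hQ'⟩
        have hfτ : facesOf [τ] = τ.powerset := by simp [facesOf]
        have hsplit : facesOf (P ++ [τ]) = facesOf P ∪ (τ.powerset \ facesOf P) := by
          rw [facesOf_append, hfτ, Finset.union_sdiff_self_eq_union]
        have hdisj : Disjoint (facesOf P) (τ.powerset \ facesOf P) := Finset.disjoint_sdiff
        rw [hsplit, Finset.sum_union hdisj, ihs, List.map_append, List.sum_append]
        simp only [List.map_cons, List.map_nil, List.sum_cons, List.sum_nil, add_zero]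
        congr 1
        -- describe the new faces
        have hNdesc : τ.powerset \ facesOf P
            = (τ \ R τ).powerset.image (fun s => s ∪ R τ) := by
          ext γ
          simp only [mem_sdiff, mem_powerset, mem_image, mem_facesOf]
          constructor
          · rintro ⟨hγτ, hnot⟩
            have hncov : ¬ coveredBefore LM τ γ := by
              rintro ⟨τ', h1, h2⟩
              rw [hprev] at h1
              exact hnot ⟨τ', h1, h2⟩
            have hRγ : R τ ⊆ γ := by
              by_contra h
              exact hncov ((hKEY τ hτLM γ hγτ).2 h)
            refine ⟨γ \ R τ, sdiff_subset_sdiff hγτ (Finset.Subset.refl _), ?_⟩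
            rw [Finset.sdiff_union_of_subset hRγ]
          · rintro ⟨s, hs, rfl⟩
            have hsub : s ∪ R τ ⊆ τ :=
              Finset.union_subset (hs.trans (Finset.sdiff_subset)) (hRsub τ)
            refine ⟨hsub, ?_⟩
            rintro ⟨τ', h1, h2⟩
            have hcov : coveredBefore LM τ (s ∪ R τ) :=
              ⟨τ', by rw [hprev]; exact h1, h2⟩
            exact ((hKEY τ hτLM _ hsub).1 hcov) Finset.subset_union_right
        have hinj : ∀ x ∈ (τ \ R τ).powerset, ∀ y ∈ (τ \ R τ).powerset,
            x ∪ R τ = y ∪ R τ → x = y := by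
          intro x hx y hy hxy
          have hdx : Disjoint x (R τ) :=
            Finset.disjoint_of_subset_left (mem_powerset.1 hx) Finset.sdiff_disjoint
          have hdy : Disjoint y (R τ) :=
            Finset.disjoint_of_subset_left (mem_powerset.1 hy) Finset.sdiff_disjoint
          rw [← Finset.union_sdiff_cancel_right hdx, hxy,
            Finset.union_sdiff_cancel_right hdy]
        rw [hNdesc, Finset.sum_image hinj]
        have hterm : ∀ s ∈ (τ \ R τ).powerset,
            (Polynomial.X : Polynomial ℤ) ^ (s ∪ R τ).card
                * (1 - Polynomial.X) ^ (d - (s ∪ R τ).card)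
            = ((Polynomial.X : Polynomial ℤ) ^ s.card
                * (1 - Polynomial.X) ^ ((τ \ R τ).card - s.card))
                * Polynomial.X ^ (R τ).card := by
          intro s hs
          have hdx : Disjoint s (R τ) :=
            Finset.disjoint_of_subset_left (mem_powerset.1 hs) Finset.sdiff_disjoint
          have hcardu : (s ∪ R τ).card = s.card + (R τ).card :=
            Finset.card_union_of_disjoint hdx
          have hsd : (τ \ R τ).card = d - (R τ).card := by
            rw [Finset.card_sdiff_of_subset (hRsub τ), hcardM τ hτLM]
          have hsle : s.card ≤ (τ \ R τ).card := Finset.card_le_card (mem_powerset.1 hs)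
          have hrle : (R τ).card ≤ d := hRle τ hτLM
          have hexp : d - (s.card + (R τ).card) = (τ \ R τ).card - s.card := by
            rw [hsd]; omega
          rw [hcardu, hexp, pow_add]
          ring
        rw [Finset.sum_congr rfl hterm, ← Finset.sum_mul, sum_pow_one_sub, one_mul]
    have hstarLM := hstar LM ⟨[], by simp⟩
    -- face counts as finset cards
    have hfaceCount : ∀ i, faceCount {γ : Finset (LamVert l p) | ∃ τ ∈ LM, γ ⊆ τ} i
        = ((facesOf LM).filter (fun s => s.card = i)).card := by
      intro i
      have hset : {s : Finset (LamVert l p) |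
          s ∈ {γ : Finset (LamVert l p) | ∃ τ ∈ LM, γ ⊆ τ} ∧ s.card = i}
          = ↑((facesOf LM).filter (fun s => s.card = i)) := by
        ext s
        simp [mem_facesOf]
      rw [faceCount, hset, Set.ncard_coe_finset]
    -- F-vector as finset cards
    have hLMfacets : ∀ τ ∈ LM, τ ∈ skelFacets l p d := by
      intro τ hτ
      have h1 := (hfacL τ).1 (hLMsubL τ hτ)
      exact ⟨h1.1.1, h1.2⟩
    have hFVec : ∀ j, FVec M j = (LM.toFinset.filter (fun τ => (R τ).card = j)).card := by
      intro j
      have hset : {μ ∈ M | mDeg μ = j}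
          = ↑((LM.toFinset.filter (fun τ => (R τ).card = j)).image σ) := by
        ext μ
        simp only [coe_image, Set.mem_image, mem_coe, mem_filter, List.mem_toFinset,
          Set.mem_setOf_eq]
        constructor
        · rintro ⟨hμM, hdegj⟩
          obtain ⟨τ, hτfac, hστ⟩ := hσ.2.2 (hMd hμM)
          have hτL : τ ∈ L := (hfacL τ).2 ⟨⟨hτfac.1, hτfac.2.le⟩, hτfac.2⟩
          have hτLM : τ ∈ LM := (hmem τ).2 ⟨hτL, hστ ▸ hμM⟩
          refine ⟨τ, ⟨hτLM, ?_⟩, hστ⟩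
          rw [← hdegR τ hτLM, hστ, hdegj]
        · rintro ⟨τ, ⟨hτLM, hrj⟩, rfl⟩
          exact ⟨((hmem τ).1 hτLM).2, by rw [hdegR τ hτLM, hrj]⟩
      rw [FVec, hset, Set.ncard_coe_finset, Finset.card_image_of_injOn]
      exact hσ.2.1.mono (fun τ hτ => hLMfacets τ (List.mem_toFinset.1 (mem_filter.1 hτ).1))
    -- assemble
    show ∑ i ∈ Finset.range (d + 1), Polynomial.C ((FVec M i : ℤ)) * Polynomial.X ^ i = _
    have hmaps1 : ∀ τ ∈ LM.toFinset, (R τ).card ∈ Finset.range (d + 1) := by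
      intro τ hτ
      exact Finset.mem_range.2 (Nat.lt_succ_of_le (hRle τ (List.mem_toFinset.1 hτ)))
    have hmaps2 : ∀ γ ∈ facesOf LM, γ.card ∈ Finset.range (d + 1) := by
      intro γ hγ
      obtain ⟨τ, hτ, hγτ⟩ := mem_facesOf.1 hγ
      exact Finset.mem_range.2 (Nat.lt_succ_of_le
        ((hcardM τ hτ) ▸ Finset.card_le_card hγτ))
    have hLHS : ∑ i ∈ Finset.range (d + 1), Polynomial.C ((FVec M i : ℤ)) * Polynomial.X ^ i
        = ∑ τ ∈ LM.toFinset, (Polynomial.X : Polynomial ℤ) ^ (R τ).card := by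
      rw [← Finset.sum_fiberwise_of_maps_to hmaps1
        (fun τ => (Polynomial.X : Polynomial ℤ) ^ (R τ).card)]
      refine Finset.sum_congr rfl fun i _ => ?_
      rw [Finset.sum_congr rfl (fun τ hτ => by rw [(mem_filter.1 hτ).2]),
        Finset.sum_const, hFVec i]
      simp [nsmul_eq_mul]
    have hRHS : ∑ i ∈ Finset.range (d + 1),
          Polynomial.C ((faceCount {γ : Finset (LamVert l p) | ∃ τ ∈ LM, γ ⊆ τ} i : ℤ))
            * Polynomial.X ^ i * (1 - Polynomial.X) ^ (d - i)
        = ∑ γ ∈ facesOf LM,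
            (Polynomial.X : Polynomial ℤ) ^ γ.card * (1 - Polynomial.X) ^ (d - γ.card) := by
      rw [← Finset.sum_fiberwise_of_maps_to hmaps2
        (fun γ => (Polynomial.X : Polynomial ℤ) ^ γ.card * (1 - Polynomial.X) ^ (d - γ.card))]
      refine Finset.sum_congr rfl fun i _ => ?_
      rw [Finset.sum_congr rfl (fun γ hγ => by rw [(mem_filter.1 hγ).2]),
        Finset.sum_const, hfaceCount i]
      simp [nsmul_eq_mul, mul_assoc]
    rw [hLHS, hRHS, hstarLM, List.sum_toFinset _ hndM]
end

section
/- Let Γ be a simplicial complex on a finite vertex set of size n, and let a group G act on the vertices of Γ so that the image of every face is a face, with the action proper: whenever F is a face of Γ and gF = F for some g ∈ G, then gv = v for every vertex v ∈ F. Let m be the number of G-orbits on the vertex set of size greater than 1. Then every face of Γ has at most n − m vertices; that is, the dimension of Γ is at most n − m − 1. -/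
open Finset

/-- If a group `G` acts properly on a simplicial complex `Γ` on `n`
vertices and `m` is the number of `G`-orbits of size greater than 1, then every face of
`Γ` has at most `n - m` vertices. -/
theorem proper_action_dimension_bound {V : Type*} [Fintype V] [DecidableEq V]
    {G : Type*} [Group G] [MulAction G V]
    (Γ : Set (Finset V)) (hΓ : IsComplex Γ)
    (hmap : ∀ g : G, ∀ F ∈ Γ, F.image (fun v => g • v) ∈ Γ)
    (hproper : ∀ g : G, ∀ F ∈ Γ, F.image (fun v => g • v) = F → ∀ v ∈ F, g • v = v) :
    ∀ F ∈ Γ, F.card ≤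
      Fintype.card V -
        {W : Set V | (∃ v : V, W = MulAction.orbit G v) ∧ 2 ≤ W.ncard}.ncard := by
  classical
  intro F hF
  set O : Set (Set V) := {W : Set V | (∃ v : V, W = MulAction.orbit G v) ∧ 2 ≤ W.ncard}
  -- key: each big orbit misses a vertex of F
  have key : ∀ W ∈ O, ∃ w ∈ W, w ∉ F := by
    intro W hW
    by_contra hcon
    push_neg at hcon
    obtain ⟨⟨v, rfl⟩, h2⟩ := hW
    -- the orbit, as a finset, is a face
    have hsub : (MulAction.orbit G v).toFinset ⊆ F := by
      intro x hx
      exact hcon x (Set.mem_toFinset.mp hx)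
    have hface : (MulAction.orbit G v).toFinset ∈ Γ := hΓ F hF _ hsub
    -- there exist two distinct elements of the orbit
    have hvmem : v ∈ MulAction.orbit G v := MulAction.mem_orbit_self v
    obtain ⟨u, hu, hne⟩ : ∃ u ∈ MulAction.orbit G v, u ≠ v := by
      by_contra h
      push_neg at h
      have : MulAction.orbit G v ⊆ {v} := fun x hx => h x hx
      have : (MulAction.orbit G v).ncard ≤ ({v} : Set V).ncard :=
        Set.ncard_le_ncard this (Set.finite_singleton v)
      rw [Set.ncard_singleton] at this
      omega
    obtain ⟨g, rfl⟩ := hu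
    -- g maps the orbit-finset to itself
    have himg : (MulAction.orbit G v).toFinset.image (fun w => g • w) =
        (MulAction.orbit G v).toFinset := by
      ext x
      simp only [Finset.mem_image, Set.mem_toFinset]
      constructor
      · rintro ⟨w, hw, rfl⟩
        obtain ⟨h, rfl⟩ := hw
        exact ⟨g * h, by simp [mul_smul]⟩
      · intro hx
        refine ⟨g⁻¹ • x, ?_, by simp⟩
        obtain ⟨h, rfl⟩ := hx
        exact ⟨g⁻¹ * h, by simp [mul_smul]⟩
    have := hproper g _ hface himg v (Set.mem_toFinset.mpr hvmem)
    exact hne this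
  -- O is finite
  have hOfin : O.Finite := Set.toFinite O
  choose wit hwitW hwitF using key
  rcases isEmpty_or_nonempty V with hV | hV
  · simp [Finset.card_eq_zero.mpr (Finset.eq_empty_of_isEmpty F)]
  set T : Finset (Set V) := hOfin.toFinset with hT
  have hcard : T.card ≤ (Finset.univ \ F).card := by
    apply Finset.card_le_card_of_injOn
      (fun W => if h : W ∈ O then wit W h else Classical.arbitrary V)
    · intro W hW
      have hWO : W ∈ O := hOfin.mem_toFinset.mp hW
      simp only [dif_pos hWO, Finset.mem_sdiff, Finset.mem_univ, true_and]
      exact Finset.mem_coe.mpr (Finset.mem_sdiff.mpr ⟨Finset.mem_univ _, hwitF W hWO⟩)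
    · intro W hW W' hW' h
      have hWO : W ∈ O := hOfin.mem_toFinset.mp hW
      have hWO' : W' ∈ O := hOfin.mem_toFinset.mp hW'
      simp only [dif_pos hWO, dif_pos hWO'] at h
      obtain ⟨v, hv⟩ := hWO.1
      obtain ⟨v', hv'⟩ := hWO'.1
      have h1 : wit W hWO ∈ MulAction.orbit G v := hv ▸ hwitW W hWO
      have h2 : wit W hWO ∈ MulAction.orbit G v' := by
        rw [h]; exact hv' ▸ hwitW W' hWO'
      rw [hv, hv', ← MulAction.orbit_eq_iff.mpr h1, ← MulAction.orbit_eq_iff.mpr h2]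
  have hOcard : O.ncard = T.card := Set.ncard_eq_toFinset_card O hOfin
  have hFc : (Finset.univ \ F).card = Fintype.card V - F.card := by
    rw [Finset.card_sdiff_of_subset (Finset.subset_univ F), Finset.card_univ]
  have hFle : F.card ≤ Fintype.card V := by
    simpa using Finset.card_le_card (Finset.subset_univ F)
  omega
end

section
/- Let Λ = Λ(l; p_1, …, p_m) with vertex set V totally ordered by O: y_1 < … < y_n, let 1 ≤ d ≤ n − m, and let L = (τ_1, τ_2, …, τ_r) be the listing of the facets of skel_d(Λ) in reverse lexicographic order with respect to O. Then for every i, τ̄_i − (∪_{j<i} τ̄_j) = { γ ⊆ τ_i : R_O(τ_i) ⊆ γ }. In particular, L is a shelling of skel_d(Λ) and |T_L(τ_i)| = |R_O(τ_i)| for every i. -/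
open Finset

section Basics
variable {l m n : ℕ} {p : Fin m → ℕ}

lemma mem_Pblock {i : Fin m} {v : LamVert l p} :
    v ∈ Pblock l p i ↔ ∃ j : Fin (p i), v = Sum.inr ⟨i, j⟩ := by
  simp [Pblock, eq_comm]

lemma Pblock_inj (i : Fin m) :
    Function.Injective (fun j : Fin (p i) => (Sum.inr ⟨i, j⟩ : LamVert l p)) := by
  intro a b h
  simpa using h

lemma card_Pblock (i : Fin m) : (Pblock l p i).card = p i := by
  rw [Pblock, Finset.card_image_of_injective _ (Pblock_inj i)]
  simp

lemma Pblock_disjoint {i j : Fin m} (hij : i ≠ j) {v : LamVert l p}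
    (hv : v ∈ Pblock l p i) : v ∉ Pblock l p j := by
  rw [mem_Pblock] at hv ⊢
  obtain ⟨a, rfl⟩ := hv
  rintro ⟨b, hb⟩
  exact hij (by simpa using congrArg (fun x => match x with | Sum.inr s => s.1 | Sum.inl _ => i) hb)

lemma mem_fullSet {τ : Finset (LamVert l p)} {i : Fin m} :
    i ∈ fullSet τ ↔ (Pblock l p i ∩ τ).card = p i - 1 := by
  simp [fullSet]

lemma miss_card {τ : Finset (LamVert l p)} {i : Fin m} (hi : i ∈ fullSet τ)
    (hpi : 1 ≤ p i) : (missSet τ i).card = 1 := by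
  rw [mem_fullSet] at hi
  have h := Finset.card_inter_add_card_sdiff (Pblock l p i) τ
  rw [card_Pblock, hi] at h
  unfold missSet
  omega

lemma miss_exists {τ : Finset (LamVert l p)} {i : Fin m} (hi : i ∈ fullSet τ)
    (hpi : 1 ≤ p i) : ∃ w, missSet τ i = {w} :=
  Finset.card_eq_one.mp (miss_card hi hpi)

/-- If a block is almost inside `insert s τ` with `τ` a face, the missing spot is `s`. -/
lemma full_of_subset_insert {τ : Finset (LamVert l p)} (hτ : τ ∈ LambdaFaces l p)
    {i : Fin m} {s : LamVert l p} (hs : s ∉ τ) (hsub : Pblock l p i ⊆ insert s τ) :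
    i ∈ fullSet τ ∧ s ∈ missSet τ i := by
  have hsP : s ∈ Pblock l p i := by
    by_contra hsP
    exact hτ i (fun v hv => by
      rcases Finset.mem_insert.mp (hsub hv) with h | h
      · exact absurd (h ▸ hv) hsP
      · exact h)
  have heq : Pblock l p i ∩ τ = (Pblock l p i).erase s := by
    apply Finset.Subset.antisymm
    · intro v hv
      rcases Finset.mem_inter.mp hv with ⟨h1, h2⟩
      exact Finset.mem_erase.mpr ⟨fun h => hs (h ▸ h2), h1⟩
    · intro v hv
      rcases Finset.mem_erase.mp hv with ⟨hne, hP⟩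
      rcases Finset.mem_insert.mp (hsub hP) with h | h
      · exact absurd h hne
      · exact Finset.mem_inter.mpr ⟨hP, h⟩
  have hcard : (Pblock l p i ∩ τ).card = p i - 1 := by
    rw [heq, Finset.card_erase_of_mem hsP, card_Pblock]
  refine ⟨mem_fullSet.mpr hcard, Finset.mem_sdiff.mpr ⟨hsP, hs⟩⟩

lemma mem_of_mem_missSet {τ : Finset (LamVert l p)} {i : Fin m} {y : LamVert l p}
    (hi : i ∈ fullSet τ) (hpi : 1 ≤ p i) (hy : y ∈ Pblock l p i)
    {w : LamVert l p} (hw : w ∈ missSet τ i) (hne : y ≠ w) : y ∈ τ := by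
  obtain ⟨w', hw'⟩ := miss_exists hi hpi
  rw [hw'] at hw
  by_contra hyτ
  have : y ∈ missSet τ i := Finset.mem_sdiff.mpr ⟨hy, hyτ⟩
  rw [hw'] at this
  exact hne (by simp_all)

lemma RSet_subset {e : LamVert l p ≃ Fin n} (hp : ∀ i, 2 ≤ p i)
    {τ : Finset (LamVert l p)} : RSet e τ ⊆ τ := by
  intro y hy
  rcases Finset.mem_union.mp hy with h | h
  · exact Finset.mem_of_mem_filter y h
  · simp only [USet, Finset.mem_filter, Finset.mem_univ, true_and] at h
    obtain ⟨i, hi, hyP, w, hw, hlt⟩ := h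
    exact mem_of_mem_missSet hi (by have := hp i; omega) hyP hw
      (fun h => by subst h; exact lt_irrefl _ hlt)

end Basics

section Order
variable {l m n : ℕ} {p : Fin m → ℕ} {e : LamVert l p ≃ Fin n}

lemma rlexLt_irrefl (e : LamVert l p ≃ Fin n) (τ : Finset (LamVert l p)) :
    ¬ rlexLt e τ τ := by
  rintro ⟨v, hv1, hv2, -⟩
  exact hv2 hv1

lemma rlexLt_asymm {τ τ' : Finset (LamVert l p)} (h1 : rlexLt e τ τ')
    (h2 : rlexLt e τ' τ) : False := by
  obtain ⟨v, hv1, hv2, hv3⟩ := h1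
  obtain ⟨u, hu1, hu2, hu3⟩ := h2
  rcases lt_trichotomy (e v) (e u) with h | h | h
  · exact hu2 ((hv3 u h).mp hu1)
  · exact hu2 (e.injective h ▸ hv1)
  · exact hv2 ((hu3 v h).mp hv1)

lemma rlexLt_ne {τ τ' : Finset (LamVert l p)} (h : rlexLt e τ τ') : τ ≠ τ' := by
  rintro rfl; exact rlexLt_irrefl e τ h

lemma mem_prevFacets_mem {L : List (Finset (LamVert l p))} {τ τ' : Finset (LamVert l p)}
    (h : τ' ∈ prevFacets L τ) : τ' ∈ L :=
  (List.takeWhile_sublist _).subset h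

lemma mem_prevFacets_ne {L : List (Finset (LamVert l p))} {τ τ' : Finset (LamVert l p)}
    (h : τ' ∈ prevFacets L τ) : τ' ≠ τ := by
  have := List.mem_takeWhile_imp h
  simpa using this

lemma rlexLt_of_mem_prevFacets {L : List (Finset (LamVert l p))}
    (hs : L.Pairwise (rlexLt e)) {τ τ' : Finset (LamVert l p)}
    (hτ : τ ∈ L) (h : τ' ∈ prevFacets L τ) : rlexLt e τ' τ := by
  have hsplit := List.takeWhile_append_dropWhile (p := fun τ'' => τ'' != τ) (l := L)
  rw [← hsplit] at hs hτ
  rcases List.mem_append.mp hτ with hmem | hmem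
  · have := List.mem_takeWhile_imp hmem
    simp at this
  · exact (List.pairwise_append.mp hs).2.2 τ' h τ hmem

lemma mem_prevFacets_of_rlexLt {L : List (Finset (LamVert l p))}
    (hs : L.Pairwise (rlexLt e)) {τ τ' : Finset (LamVert l p)}
    (hτ : τ ∈ L) (hτ' : τ' ∈ L) (h : rlexLt e τ' τ) : τ' ∈ prevFacets L τ := by
  induction L with
  | nil => exact absurd hτ List.not_mem_nil
  | cons a tl ih =>
    rcases List.pairwise_cons.mp hs with ⟨ha, htl⟩
    by_cases haτ : a = τ
    · subst haτ
      rcases List.mem_cons.mp hτ' with rfl | hmem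
      · exact absurd h (rlexLt_irrefl e _)
      · exact absurd h (fun h => rlexLt_asymm (ha τ' hmem) h)
    · unfold prevFacets
      rw [List.takeWhile_cons]
      simp only [bne_iff_ne, ne_eq, haτ, not_false_eq_true, if_pos]
      rcases List.mem_cons.mp hτ' with rfl | hmem
      · exact List.mem_cons_self
      · have hτtl : τ ∈ tl := by
          rcases List.mem_cons.mp hτ with rfl | h2
          · exact absurd rfl haτ
          · exact h2
        exact List.mem_cons_of_mem _ (ih htl hτtl hmem)

/-- The swap construction: replace `x ∈ τ` by a smaller `s ∉ τ`. -/
lemma swap_lemma {τ : Finset (LamVert l p)} {x s : LamVert l p}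
    (hx : x ∈ τ) (hs : s ∉ τ) (hlt : e s < e x) :
    (insert s (τ.erase x)).card = τ.card ∧ rlexLt e (insert s (τ.erase x)) τ ∧
    ∀ γ ⊆ τ, x ∉ γ → γ ⊆ insert s (τ.erase x) := by
  have hxs : x ≠ s := fun h => by subst h; exact lt_irrefl _ hlt
  have hsne : s ∉ τ.erase x := fun h => hs (Finset.mem_of_mem_erase h)
  refine ⟨?_, ⟨x, hx, ?_, ?_⟩, ?_⟩
  · rw [Finset.card_insert_of_notMem hsne, Finset.card_erase_of_mem hx]
    have : 1 ≤ τ.card := Finset.card_pos.mpr ⟨x, hx⟩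
    omega
  · intro hmem
    rcases Finset.mem_insert.mp hmem with h | h
    · exact hxs h
    · exact (Finset.mem_erase.mp h).1 rfl

  · intro w hw
    have hwx : w ≠ x := fun h => by subst h; exact lt_irrefl _ hw
    have hws : w ≠ s := fun h => by subst h; exact lt_irrefl _ (hlt.trans hw)
    constructor
    · intro hmem
      rcases Finset.mem_insert.mp hmem with h | h
      · exact absurd h hws
      · exact Finset.mem_of_mem_erase h
    · intro hmem
      exact Finset.mem_insert_of_mem (Finset.mem_erase.mpr ⟨hwx, hmem⟩)
  · intro γ hγ hxγ v hv
    exact Finset.mem_insert_of_mem (Finset.mem_erase.mpr ⟨fun h => hxγ (h ▸ hv), hγ hv⟩)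

end Order

section Main
variable {l m n d : ℕ} {p : Fin m → ℕ} {e : LamVert l p ≃ Fin n}

lemma exists_earlier_facet (hp : ∀ i, 2 ≤ p i) (e : LamVert l p ≃ Fin n)
    {τ γ : Finset (LamVert l p)} (hτ : τ ∈ skelFacets l p d) (hγ : γ ⊆ τ)
    {x : LamVert l p} (hx : x ∈ RSet e τ) (hxγ : x ∉ γ) :
    ∃ τ', τ' ∈ skelFacets l p d ∧ rlexLt e τ' τ ∧ γ ⊆ τ' := by
  obtain ⟨hτf, hτc⟩ := hτ
  rcases Finset.mem_union.mp hx with hx | hx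
  · -- x ∈ tauAbove
    rcases Finset.mem_filter.mp hx with ⟨hxτ, hlt⟩
    have hne : ((sCand τ).image e).Nonempty := by
      rw [Finset.nonempty_iff_ne_empty]
      intro h
      have h2 : sPos e τ = ⊤ := by rw [sPos]; exact Finset.min_eq_top.mpr h
      rw [h2] at hlt
      exact not_top_lt hlt
    obtain ⟨a, ha, hamin⟩ : ∃ a ∈ (sCand τ).image e, sPos e τ = (a : WithTop (Fin n)) := by
      refine ⟨_, Finset.min'_mem _ hne, (Finset.coe_min' hne).symm⟩
    obtain ⟨s, hsC, hse⟩ := Finset.mem_image.mp ha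
    rcases Finset.mem_filter.mp hsC with ⟨-, hsτ, hsmiss⟩
    have hslt : e s < e x := by
      rw [hamin, ← hse] at hlt
      exact_mod_cast hlt
    obtain ⟨hcard, hrlex, hsub⟩ := swap_lemma (e := e) hxτ hsτ hslt
    refine ⟨insert s (τ.erase x), ⟨?_, by rw [hcard, hτc]⟩, hrlex, hsub γ hγ hxγ⟩
    intro i hi
    have : Pblock l p i ⊆ insert s τ :=
      hi.trans (Finset.insert_subset_insert _ (Finset.erase_subset _ _))
    obtain ⟨hfull, hmiss⟩ := full_of_subset_insert hτf hsτ this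
    exact hsmiss i hfull hmiss
  · -- x ∈ USet
    simp only [USet, Finset.mem_filter, Finset.mem_univ, true_and] at hx
    obtain ⟨i, hifull, hxP, w, hwmiss, hwlt⟩ := hx
    have hp1 : 1 ≤ p i := by have := hp i; omega
    have hxτ : x ∈ τ := mem_of_mem_missSet hifull hp1 hxP hwmiss
      (fun h => by subst h; exact lt_irrefl _ hwlt)
    have hwτ : w ∉ τ := (Finset.mem_sdiff.mp hwmiss).2
    obtain ⟨hcard, hrlex, hsub⟩ := swap_lemma (e := e) hxτ hwτ hwlt
    refine ⟨insert w (τ.erase x), ⟨?_, by rw [hcard, hτc]⟩, hrlex, hsub γ hγ hxγ⟩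
    intro j hj
    have hsub2 : Pblock l p j ⊆ insert w τ :=
      hj.trans (Finset.insert_subset_insert _ (Finset.erase_subset _ _))
    obtain ⟨hjfull, hjmiss⟩ := full_of_subset_insert hτf hwτ hsub2
    have hij : i = j := by
      by_contra hij
      exact Pblock_disjoint hij (Finset.mem_sdiff.mp hwmiss).1 (Finset.mem_sdiff.mp hjmiss).1
    subst hij
    have : x ∈ insert w (τ.erase x) := hj hxP
    rcases Finset.mem_insert.mp this with h | h
    · subst h; exact lt_irrefl _ hwlt
    · exact (Finset.mem_erase.mp h).1 rfl

lemma no_earlier (hp : ∀ i, 2 ≤ p i) (e : LamVert l p ≃ Fin n)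
    {τ τ' γ : Finset (LamVert l p)}
    (hτ : τ ∈ skelFacets l p d) (hτ' : τ' ∈ skelFacets l p d)
    (hγτ : γ ⊆ τ) (hγτ' : γ ⊆ τ') (hR : RSet e τ ⊆ γ) (hlt : rlexLt e τ' τ) : False := by
  obtain ⟨v, hvτ, hvτ', hagree⟩ := hlt
  have hvγ : v ∉ γ := fun h => hvτ' (hγτ' h)
  have hvR : v ∉ RSet e τ := fun h => hvγ (hR h)
  have hvs : (e v : WithTop (Fin n)) ≤ sPos e τ := by
    by_contra h
    exact hvR (Finset.mem_union_left _ (Finset.mem_filter.mpr ⟨hvτ, not_le.mp h⟩))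
  set A := τ \ τ' with hA
  set B := τ' \ τ with hB
  have hcardAB : A.card = B.card := Finset.card_sdiff_comm (by rw [hτ.2, hτ'.2])
  have hvA : v ∈ A := Finset.mem_sdiff.mpr ⟨hvτ, hvτ'⟩
  have key : ∀ u ∈ B, ∃ i : Fin m, ∃ z : LamVert l p,
      i ∈ fullSet τ ∧ u ∈ missSet τ i ∧ z ∈ A.erase v ∧ z ∈ Pblock l p i := by
    intro u hu
    rcases Finset.mem_sdiff.mp hu with ⟨huτ', huτ⟩
    have huv : e u < e v := by
      rcases lt_trichotomy (e u) (e v) with h | h | h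
      · exact h
      · exact absurd (e.injective h ▸ huτ') hvτ'
      · exact absurd ((hagree u h).mp huτ') huτ
    have husC : u ∉ sCand τ := by
      intro h
      have h1 : sPos e τ ≤ (e u : WithTop (Fin n)) :=
        Finset.min_le (Finset.mem_image_of_mem e h)
      have h2 : (e u : WithTop (Fin n)) < (e v : WithTop (Fin n)) :=
        WithTop.coe_lt_coe.mpr huv
      exact absurd ((hvs.trans h1).trans_lt h2) (lt_irrefl _)
    have : ∃ i ∈ fullSet τ, u ∈ missSet τ i := by
      by_contra h
      push_neg at h
      exact husC (Finset.mem_filter.mpr ⟨Finset.mem_univ _, huτ, h⟩)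
    obtain ⟨i, hifull, humiss⟩ := this
    have hp1 : 1 ≤ p i := by have := hp i; omega
    obtain ⟨z, hzP, hzτ'⟩ := Finset.not_subset.mp (hτ'.1 i)
    have hzu : z ≠ u := fun h => hzτ' (h ▸ huτ')
    have hzτ : z ∈ τ := mem_of_mem_missSet hifull hp1 hzP humiss hzu
    have hzlt : e z < e u := by
      rcases lt_trichotomy (e z) (e u) with h | h | h
      · exact h
      · exact absurd (e.injective h) hzu
      · refine absurd (hγτ' (hR ?_)) hzτ'
        exact Finset.mem_union_right _ (Finset.mem_filter.mpr
          ⟨Finset.mem_univ _, i, hifull, hzP, u, humiss, h⟩)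
    have hzv : z ≠ v := fun h => by
      subst h; exact absurd (hzlt.trans huv) (lt_irrefl _)
    exact ⟨i, z, hifull, humiss,
      Finset.mem_erase.mpr ⟨hzv, Finset.mem_sdiff.mpr ⟨hzτ, hzτ'⟩⟩, hzP⟩
  choose fi fz hfull hmiss hzA hzP using key
  classical
  have hinj : Set.InjOn (fun u => if h : u ∈ B then fz u h else v) B := by
    intro u1 h1 u2 h2 heq
    simp only [Finset.mem_coe] at h1 h2
    replace heq : fz u1 h1 = fz u2 h2 := by simpa [h1, h2] using heq
    have hieq : fi u1 h1 = fi u2 h2 := by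
      by_contra hne
      exact Pblock_disjoint hne (hzP u1 h1) (heq ▸ hzP u2 h2)
    obtain ⟨w, hw⟩ := miss_exists (hfull u1 h1) (by have := hp (fi u1 h1); omega)
    have e1 := hmiss u1 h1
    have e2 := hmiss u2 h2
    rw [hw] at e1
    rw [← hieq, hw] at e2
    rw [Finset.mem_singleton.mp e1, Finset.mem_singleton.mp e2]
  have hmaps : ∀ u ∈ B, (if h : u ∈ B then fz u h else v) ∈ A.erase v := by
    intro u hu
    rw [dif_pos hu]
    exact hzA u hu
  have hle : B.card ≤ (A.erase v).card := Finset.card_le_card_of_injOn _ hmaps hinj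
  have : (A.erase v).card = A.card - 1 := Finset.card_erase_of_mem hvA
  have hA1 : 1 ≤ A.card := Finset.card_pos.mpr ⟨v, hvA⟩
  omega

end Main

section Ext
variable {l m n d : ℕ} {p : Fin m → ℕ}

lemma card_LamVert (hn : n = l + ∑ i, p i) : Fintype.card (LamVert l p) = n := by
  simp [LamVert, hn]

lemma sCand_nonempty (hp : ∀ i, 2 ≤ p i) (hn : n = l + ∑ i, p i) (hd2 : d ≤ n - m)
    {s : Finset (LamVert l p)} (hcard : s.card < d) : (sCand s).Nonempty := by
  classical
  by_contra h
  rw [Finset.not_nonempty_iff_eq_empty] at h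
  have hsub : (Finset.univ : Finset (LamVert l p)) ⊆
      s ∪ (fullSet s).biUnion (fun i => missSet s i) := by
    intro v _
    by_contra hv
    rw [Finset.mem_union, Finset.mem_biUnion] at hv
    push_neg at hv
    have : v ∈ sCand s := Finset.mem_filter.mpr ⟨Finset.mem_univ _, hv.1, hv.2⟩
    rw [h] at this
    exact absurd this (Finset.notMem_empty v)
  have hcard2 : n ≤ s.card + m := by
    have h1 := Finset.card_le_card hsub
    rw [Finset.card_univ, card_LamVert hn] at h1
    have h2 : ((fullSet s).biUnion (fun i => missSet s i)).card ≤ m := by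
      refine le_trans (Finset.card_biUnion_le) ?_
      calc ∑ i ∈ fullSet s, (missSet s i).card = ∑ i ∈ fullSet s, 1 := by
            refine Finset.sum_congr rfl (fun i hi => miss_card hi (by have := hp i; omega))
        _ ≤ m := by simpa using Finset.card_le_univ (fullSet s)
    have h3 := Finset.card_union_le s ((fullSet s).biUnion (fun i => missSet s i))
    omega
  have hmn : 2 * m ≤ n := by
    have : 2 * m ≤ ∑ i : Fin m, p i := by
      calc 2 * m = ∑ _i : Fin m, 2 := by simp [mul_comm]
        _ ≤ ∑ i : Fin m, p i := Finset.sum_le_sum (fun i _ => hp i)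
    omega
  omega

lemma extend_face (hp : ∀ i, 2 ≤ p i) (hn : n = l + ∑ i, p i) (hd2 : d ≤ n - m) :
    ∀ k (s : Finset (LamVert l p)), s ∈ LambdaFaces l p → s.card + k = d →
    ∃ t ∈ LambdaFaces l p, s ⊆ t ∧ t.card = d := by
  intro k
  induction k with
  | zero => exact fun s hs h => ⟨s, hs, Finset.Subset.refl _, by omega⟩
  | succ k ih =>
    intro s hs h
    obtain ⟨v, hv⟩ := sCand_nonempty (n := n) hp hn hd2 (s := s) (by omega)
    rcases Finset.mem_filter.mp hv with ⟨-, hvs, hvmiss⟩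
    have hface : insert v s ∈ LambdaFaces l p := by
      intro i hi
      obtain ⟨hfull, hmiss⟩ := full_of_subset_insert hs hvs hi
      exact hvmiss i hfull hmiss
    obtain ⟨t, ht, hsub, hc⟩ := ih (insert v s) hface
      (by rw [Finset.card_insert_of_notMem hvs]; omega)
    exact ⟨t, ht, (Finset.subset_insert _ _).trans hsub, hc⟩

end Ext

section Final
variable {l m n d : ℕ} {p : Fin m → ℕ}

theorem notCovered_iff' (hp : ∀ i, 2 ≤ p i) (e : LamVert l p ≃ Fin n)
    {L : List (Finset (LamVert l p))}
    (hmem : ∀ τ, τ ∈ L ↔ τ ∈ skelFacets l p d)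
    (hsorted : L.Pairwise (rlexLt e))
    {τ : Finset (LamVert l p)} (hτL : τ ∈ L)
    {γ : Finset (LamVert l p)} (hγ : γ ⊆ τ) :
    ¬ coveredBefore L τ γ ↔ RSet e τ ⊆ γ := by
  constructor
  · intro hnc
    by_contra hns
    obtain ⟨x, hxR, hxγ⟩ := Finset.not_subset.mp hns
    obtain ⟨τ', hτ'f, hlt, hγ'⟩ := exists_earlier_facet hp e ((hmem τ).mp hτL) hγ hxR hxγ
    exact hnc ⟨τ', mem_prevFacets_of_rlexLt hsorted hτL ((hmem τ').mpr hτ'f) hlt, hγ'⟩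
  · rintro hR ⟨τ', hτ'p, hγ'⟩
    exact no_earlier hp e ((hmem τ).mp hτL) ((hmem τ').mp (mem_prevFacets_mem hτ'p)) hγ hγ' hR
      (rlexLt_of_mem_prevFacets hsorted hτL hτ'p)

end Final

/-- Listing the facets of `skel_d(Λ)` in reverse lexicographic order with
respect to the vertex ordering `e` yields, for every facet `τ`,
`τ̄ − (∪_{earlier} τ̄') = {γ ⊆ τ : R_O(τ) ⊆ γ}`; in particular this listing is a shelling
of `skel_d(Λ)` and `|T_L(τ)| = |R_O(τ)|` for every facet `τ`. -/
theorem revlex_shelling {l m n d : ℕ} (p : Fin m → ℕ)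
    (hp : ∀ i, 2 ≤ p i) (hn : n = l + ∑ i, p i)
    (hd1 : 1 ≤ d) (hd2 : d ≤ n - m)
    (e : LamVert l p ≃ Fin n)
    (L : List (Finset (LamVert l p)))
    (hmem : ∀ τ, τ ∈ L ↔ τ ∈ skelFacets l p d)
    (hsorted : L.Pairwise (rlexLt e)) :
    (∀ τ ∈ L, ∀ γ, γ ⊆ τ → (¬ coveredBefore L τ γ ↔ RSet e τ ⊆ γ)) ∧
    IsShelling (skel l p d) d L ∧
    ∀ τ ∈ L, (TL L τ).ncard = (RSet e τ).card := by
  classical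
  have part1 : ∀ τ ∈ L, ∀ γ, γ ⊆ τ → (¬ coveredBefore L τ γ ↔ RSet e τ ⊆ γ) :=
    fun τ hτ γ hγ => notCovered_iff' hp e hmem hsorted hτ hγ
  have covIff : ∀ τ ∈ L, ∀ γ, γ ⊆ τ → (coveredBefore L τ γ ↔ ¬ RSet e τ ⊆ γ) := by
    intro τ hτ γ hγ
    rw [← part1 τ hτ γ hγ, not_not]
  have cardτ : ∀ τ ∈ L, τ.card = d := fun τ hτ => ((hmem τ).mp hτ).2
  have covErase : ∀ τ ∈ L, ∀ x ∈ RSet e τ, coveredBefore L τ (τ.erase x) := by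
    intro τ hτ x hx
    refine (covIff τ hτ _ (Finset.erase_subset _ _)).mpr ?_
    intro hsub
    exact (Finset.mem_erase.mp (hsub hx)).1 rfl
  have notCovSelf : ∀ τ ∈ L, ¬ coveredBefore L τ τ := by
    intro τ hτ
    exact (part1 τ hτ τ (Finset.Subset.refl _)).mpr (RSet_subset hp)
  refine ⟨part1, ⟨?_, ?_, ?_, ?_⟩, ?_⟩
  · -- Nodup
    exact hsorted.imp (fun h => rlexLt_ne h)
  · -- membership
    intro τ
    rw [hmem τ]
    constructor
    · rintro ⟨h1, h2⟩; exact ⟨⟨h1, le_of_eq h2⟩, h2⟩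
    · rintro ⟨⟨h1, -⟩, h2⟩; exact ⟨h1, h2⟩
  · -- every face under a facet
    rintro s ⟨hs1, hs2⟩
    obtain ⟨t, ht, hsub, hc⟩ := extend_face hp hn hd2 (d - s.card) s hs1 (by omega)
    exact ⟨t, (hmem t).mpr ⟨ht, hc⟩, hsub⟩
  · -- shelling purity
    intro τ hτ hprev
    have hRne : (RSet e τ).Nonempty := by
      rw [Finset.nonempty_iff_ne_empty]
      intro hR
      obtain ⟨τ0, hτ0⟩ : ∃ τ0, τ0 ∈ prevFacets L τ := by
        cases h : prevFacets L τ with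
        | nil => exact absurd h hprev
        | cons a tl => exact ⟨a, h ▸ (List.mem_cons_self : a ∈ a :: tl)⟩
      have : coveredBefore L τ ∅ := ⟨τ0, hτ0, Finset.empty_subset _⟩
      have := (covIff τ hτ ∅ (Finset.empty_subset _)).mp this
      rw [hR] at this
      exact this (Finset.Subset.refl _)
    obtain ⟨x, hx⟩ := hRne
    have hxτ : x ∈ τ := RSet_subset hp hx
    constructor
    · refine ⟨τ.erase x, ⟨Finset.erase_subset _ _, covErase τ hτ x hx⟩, ?_⟩
      rw [Finset.card_erase_of_mem hxτ, cardτ τ hτ]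
    · rintro γ ⟨hγτ, hγcov⟩
      obtain ⟨y, hyR, hyγ⟩ := Finset.not_subset.mp ((covIff τ hτ γ hγτ).mp hγcov)
      have hyτ : y ∈ τ := RSet_subset hp hyR
      refine ⟨τ.erase y, ⟨Finset.erase_subset _ _, covErase τ hτ y hyR⟩, ?_, ?_⟩
      · intro v hv
        exact Finset.mem_erase.mpr ⟨fun h => hyγ (h ▸ hv), hγτ hv⟩
      · rw [Finset.card_erase_of_mem hyτ, cardτ τ hτ]
  · -- TL count
    intro τ hτ
    have hTL : TL L τ = ↑((RSet e τ).image (fun x => τ.erase x)) := by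
      ext γ
      simp only [TL, Set.mem_setOf_eq, Finset.coe_image, Set.mem_image, Finset.mem_coe]
      constructor
      · rintro ⟨hγτ, hγcov, hmax⟩
        obtain ⟨x, hxR, hxγ⟩ := Finset.not_subset.mp ((covIff τ hτ γ hγτ).mp hγcov)
        have hsub : γ ⊆ τ.erase x :=
          fun v hv => Finset.mem_erase.mpr ⟨fun h => hxγ (h ▸ hv), hγτ hv⟩
        have := hmax (τ.erase x) hsub (Finset.erase_subset _ _) (covErase τ hτ x hxR)
        exact ⟨x, hxR, this⟩
      · rintro ⟨x, hxR, rfl⟩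
        have hxτ : x ∈ τ := RSet_subset hp hxR
        refine ⟨Finset.erase_subset _ _, covErase τ hτ x hxR, ?_⟩
        intro γ' hsub hsub' hcov
        by_cases hxγ' : x ∈ γ'
        · exfalso
          have hγ'τ : γ' = τ := by
            refine Finset.Subset.antisymm hsub' (fun v hv => ?_)
            by_cases hvx : v = x
            · exact hvx ▸ hxγ'
            · exact hsub (Finset.mem_erase.mpr ⟨hvx, hv⟩)
          rw [hγ'τ] at hcov
          exact notCovSelf τ hτ hcov
        · exact Finset.Subset.antisymm
            (fun v hv => Finset.mem_erase.mpr ⟨fun h => hxγ' (h ▸ hv), hsub' hv⟩) hsub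
    rw [hTL, Set.ncard_coe_finset]
    refine Finset.card_image_of_injOn (fun x hx y hy hxy => ?_)
    by_contra hne
    have hyτ : y ∈ τ := RSet_subset hp hy
    have : y ∈ τ.erase x := Finset.mem_erase.mpr ⟨fun h => hne h.symm, hyτ⟩
    rw [hxy] at this
    exact (Finset.mem_erase.mp this).1 rfl
end
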